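/- arXiv:2311.13699 — 9 statements merged into one kernel-verified Lean document; each statement's English description precedes it below -/
import Mathlib

section
/- Let M be a Polish space equipped with a linear order ≤ whose graph {(x, y) : M × M | x ≤ y} is a Borel subset of M × M. Then for every uncountable Borel set X ⊆ M there exists a map f from Cantor space (ℕ → Bool) into M whose range is contained in X and which is strictly increasing with respect to the lexicographic order: whenever r ≠ s and, at the least coordinate n where r and s differ, r(n) < s(n), one has f(r) < f(s). In particular f is injective. -/
open Topology MeasureTheory Set ENNReal

namespace IncreasingCantorAux

variable {α : Type*} [MeasurableSpace α] [LinearOrder α]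

lemma measL (hle : MeasurableSet {p : α × α | p.1 ≤ p.2}) :
    MeasurableSet {p : α × α | p.2 < p.1} := by
  have h : {p : α × α | p.2 < p.1} = {p : α × α | p.1 ≤ p.2}ᶜ := by
    ext p; simp [not_le]
  rw [h]; exact hle.compl

lemma measL' (hle : MeasurableSet {p : α × α | p.1 ≤ p.2}) :
    MeasurableSet {p : α × α | p.1 < p.2} := by
  have h : {p : α × α | p.1 < p.2} = Prod.swap ⁻¹' {p : α × α | p.2 < p.1} := by
    ext p; simp
  rw [h]; exact measurable_swap (measL hle)

lemma measSingleton (hle : MeasurableSet {p : α × α | p.1 ≤ p.2}) (z : α) :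
    MeasurableSet ({z} : Set α) := by
  have h : ({z} : Set α)
      = (fun y => (y, z)) ⁻¹' {p : α × α | p.1 ≤ p.2}
        ∩ Prod.mk z ⁻¹' {p : α × α | p.1 ≤ p.2} := by
    ext y
    simp only [Set.mem_singleton_iff, Set.mem_inter_iff, Set.mem_preimage, Set.mem_setOf_eq]
    constructor
    · rintro rfl; exact ⟨le_rfl, le_rfl⟩
    · rintro ⟨h1, h2⟩; exact le_antisymm h1 h2
  rw [h]
  exact ((measurable_id.prodMk measurable_const) hle).inter (measurable_prodMk_left hle)

theorem exists_split (hle : MeasurableSet {p : α × α | p.1 ≤ p.2})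
    (ν : Measure α) [IsFiniteMeasure ν] [NullSingletonClass ν] (hν : ν Set.univ ≠ 0) :
    ∃ C₀ C₁ : Set α, MeasurableSet C₀ ∧ MeasurableSet C₁ ∧ 0 < ν C₀ ∧ 0 < ν C₁ ∧
      ∀ x ∈ C₀, ∀ y ∈ C₁, x < y := by
  classical
  have hL : MeasurableSet {p : α × α | p.2 < p.1} := measL hle
  have hL' : MeasurableSet {p : α × α | p.1 < p.2} := measL' hle
  set g : α → ℝ≥0∞ := fun x => ν {y | y < x} with hg_def
  have hgm : Measurable g := measurable_measure_prodMk_left hL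
  by_cases hsplit : ∃ t : ℝ≥0∞, 0 < ν {x | g x < t} ∧ 0 < ν {x | t ≤ g x}
  · obtain ⟨t, h0, h1⟩ := hsplit
    refine ⟨{x | g x < t}, {x | t ≤ g x}, hgm measurableSet_Iio, hgm measurableSet_Ici,
      h0, h1, ?_⟩
    intro x hx y hy
    by_contra hxy
    have hyx : y ≤ x := not_lt.mp hxy
    have hsub : {z | z < y} ⊆ {z | z < x} := fun z hz => lt_of_lt_of_le hz hyx
    have hgyx : g y ≤ g x := measure_mono hsub
    exact (hy.trans hgyx).not_gt hx
  · exfalso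
    push_neg at hsplit
    have hB : ∀ t : ℝ≥0∞, ν {x | g x < t} = 0 ∨ ν {x | t ≤ g x} = 0 := by
      intro t
      rcases eq_or_ne (ν {x | g x < t}) 0 with h | h
      · exact Or.inl h
      · have := hsplit t (pos_iff_ne_zero.mpr h)
        exact Or.inr (by simpa [pos_iff_ne_zero, not_not] using this)
    set c : ℝ≥0∞ := ν Set.univ with hc_def
    have hc0 : c ≠ 0 := hν
    have hctop : c ≠ ⊤ := measure_ne_top ν _
    set m : Measure (α × α) := ν.prod ν with hm_def
    set g' : α → ℝ≥0∞ := fun z => ν {x | z < x} with hg'_def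
    have hg'm : Measurable g' := measurable_measure_prodMk_left hL'
    have h_add : ∀ z : α, g z + g' z = c := by
      intro z
      have hdisj : Disjoint {y | y < z} {x | z < x} :=
        Set.disjoint_left.mpr fun y hy hy' => lt_asymm hy hy'
      have hun : {y | y < z} ∪ {x | z < x} = ({z} : Set α)ᶜ := by
        ext y
        simp only [Set.mem_union, Set.mem_setOf_eq, Set.mem_compl_iff, Set.mem_singleton_iff]
        exact lt_or_lt_iff_ne
      have hm2 : MeasurableSet {x | z < x} := measurable_prodMk_left hL'
      calc g z + g' z = ν ({y | y < z} ∪ {x | z < x}) := (measure_union hdisj hm2).symm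
        _ = ν (({z} : Set α)ᶜ) := by rw [hun]
        _ = c := by
            rw [measure_compl (measSingleton hle z) (measure_ne_top ν _), measure_singleton,
              tsub_zero]
    have hdiagm : MeasurableSet {p : α × α | p.1 = p.2} := by
      have h : {p : α × α | p.1 = p.2}
          = {p : α × α | p.1 ≤ p.2} ∩ {p : α × α | p.1 < p.2}ᶜ := by
        ext p
        simp only [Set.mem_setOf_eq, Set.mem_inter_iff, Set.mem_compl_iff, not_lt]
        exact le_antisymm_iff
      rw [h]; exact hle.inter hL'.compl
    have hdiag0 : m {p : α × α | p.1 = p.2} = 0 := by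
      rw [hm_def, Measure.prod_apply hdiagm]
      have hz : ∀ x : α, ν (Prod.mk x ⁻¹' {p : α × α | p.1 = p.2}) = 0 := by
        intro x
        have hx : Prod.mk x ⁻¹' {p : α × α | p.1 = p.2} = ({x} : Set α) := by
          ext y; simp [eq_comm]
        rw [hx, measure_singleton]
      simp only [hz, lintegral_zero]
    have hmL : m {p : α × α | p.2 < p.1} = ∫⁻ x, g x ∂ν := by
      rw [hm_def, Measure.prod_apply hL]; rfl
    have hswap : ∀ s : Set (α × α), MeasurableSet s → m (Prod.swap ⁻¹' s) = m s := by
      intro s hs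
      have h1 : Measure.map Prod.swap m = m := by rw [hm_def]; exact Measure.prod_swap
      conv_rhs => rw [← h1]
      rw [Measure.map_apply measurable_swap hs]
    have hmL' : m {p : α × α | p.1 < p.2} = ∫⁻ x, g x ∂ν := by
      have h1 : Prod.swap ⁻¹' {p : α × α | p.2 < p.1} = {p : α × α | p.1 < p.2} := by
        ext p; simp
      rw [← h1, hswap _ hL, hmL]
    set I₁ : ℝ≥0∞ := ∫⁻ x, g x ∂ν with hI₁_def
    have hI₁fin : I₁ ≠ ⊤ := by
      have hb : I₁ ≤ c * c := by
        rw [hI₁_def]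
        calc ∫⁻ x, g x ∂ν ≤ ∫⁻ _, c ∂ν :=
              lintegral_mono fun x => measure_mono (Set.subset_univ _)
          _ = c * c := by rw [lintegral_const]
      exact ne_top_of_le_ne_top (ENNReal.mul_ne_top hctop hctop) hb
    have huniv : (Set.univ : Set (α × α))
        = {p : α × α | p.2 < p.1} ∪ {p : α × α | p.1 < p.2} ∪ {p : α × α | p.1 = p.2} := by
      ext p
      simp only [Set.mem_univ, Set.mem_union, Set.mem_setOf_eq, true_iff]
      rcases lt_trichotomy p.2 p.1 with h | h | h
      · exact Or.inl (Or.inl h)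
      · exact Or.inr h.symm
      · exact Or.inl (Or.inr h)
    have hdisjLL' : Disjoint {p : α × α | p.2 < p.1} {p : α × α | p.1 < p.2} :=
      Set.disjoint_left.mpr fun p hp hp' => lt_asymm hp hp'
    have hmuniv : m Set.univ = c * c := by
      rw [hm_def, ← Set.univ_prod_univ, Measure.prod_prod]
    have hImc : I₁ + I₁ = c * c := by
      have hle1 : c * c ≤ I₁ + I₁ := by
        rw [← hmuniv, huniv]
        calc m ({p : α × α | p.2 < p.1} ∪ {p : α × α | p.1 < p.2} ∪ {p : α × α | p.1 = p.2})
            ≤ m ({p : α × α | p.2 < p.1} ∪ {p : α × α | p.1 < p.2})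
              + m {p : α × α | p.1 = p.2} := measure_union_le _ _
          _ = m ({p : α × α | p.2 < p.1} ∪ {p : α × α | p.1 < p.2}) := by
              rw [hdiag0, add_zero]
          _ ≤ m {p : α × α | p.2 < p.1} + m {p : α × α | p.1 < p.2} := measure_union_le _ _
          _ = I₁ + I₁ := by rw [hmL, hmL']
      have hle2 : I₁ + I₁ ≤ c * c := by
        have hu := measure_union (μ := m) hdisjLL' hL'
        rw [hmL, hmL'] at hu
        rw [← hu, ← hmuniv]
        exact measure_mono (Set.subset_univ _)
      exact le_antisymm hle2 hle1
    -- the pointwise square identity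
    have hsetx : ∀ x : α, MeasurableSet {y : α | y < x} :=
      fun x => measurable_prodMk_left hL
    have hsq : ∀ x : α, g x * g x = 2 * ∫⁻ z, (if z < x then g z else 0) ∂ν := by
      intro x
      have hTm : MeasurableSet {p : α × α | p.2 < p.1 ∧ p.1 < x} := by
        have h2 : MeasurableSet {p : α × α | p.1 < x} := measurable_fst (hsetx x)
        exact hL.inter h2
      have hT'm : MeasurableSet {p : α × α | p.1 < p.2 ∧ p.2 < x} := by
        have h2 : MeasurableSet {p : α × α | p.2 < x} := measurable_snd (hsetx x)
        exact hL'.inter h2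
      have hswapT : Prod.swap ⁻¹' {p : α × α | p.2 < p.1 ∧ p.1 < x}
          = {p : α × α | p.1 < p.2 ∧ p.2 < x} := by
        ext p; simp
      have hmT : m {p : α × α | p.2 < p.1 ∧ p.1 < x}
          = ∫⁻ z, (if z < x then g z else 0) ∂ν := by
        rw [hm_def, Measure.prod_apply hTm]
        apply lintegral_congr
        intro z
        by_cases hz : z < x
        · have : Prod.mk z ⁻¹' {p : α × α | p.2 < p.1 ∧ p.1 < x} = {y : α | y < z} := by
            ext y
            simp only [Set.mem_preimage, Set.mem_setOf_eq]
            exact ⟨fun h => h.1, fun h => ⟨h, hz⟩⟩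
          rw [this, if_pos hz]
        · have : Prod.mk z ⁻¹' {p : α × α | p.2 < p.1 ∧ p.1 < x} = (∅ : Set α) := by
            ext y
            simp only [Set.mem_preimage, Set.mem_setOf_eq, Set.mem_empty_iff_false, iff_false]
            exact fun h => hz h.2
          rw [this, if_neg hz, measure_empty]
      have hmT' : m {p : α × α | p.1 < p.2 ∧ p.2 < x}
          = ∫⁻ z, (if z < x then g z else 0) ∂ν := by
        rw [← hswapT, hswap _ hTm, hmT]
      have hSq : m ({y : α | y < x} ×ˢ {y : α | y < x}) = g x * g x := by
        rw [hm_def, Measure.prod_prod]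
      have hsub1 : {y : α | y < x} ×ˢ {y : α | y < x}
          ⊆ {p : α × α | p.2 < p.1 ∧ p.1 < x} ∪ {p : α × α | p.1 < p.2 ∧ p.2 < x}
            ∪ {p : α × α | p.1 = p.2} := by
        rintro ⟨a, b⟩ ⟨ha, hb⟩
        rcases lt_trichotomy b a with h | h | h
        · exact Or.inl (Or.inl ⟨h, ha⟩)
        · exact Or.inr h.symm
        · exact Or.inl (Or.inr ⟨h, hb⟩)
      have hsub2 : {p : α × α | p.2 < p.1 ∧ p.1 < x} ∪ {p : α × α | p.1 < p.2 ∧ p.2 < x}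
          ⊆ {y : α | y < x} ×ˢ {y : α | y < x} := by
        rintro ⟨a, b⟩ (⟨h1, h2⟩ | ⟨h1, h2⟩)
        · exact ⟨h2, h1.trans h2⟩
        · exact ⟨h1.trans h2, h2⟩
      have hdisjT : Disjoint {p : α × α | p.2 < p.1 ∧ p.1 < x}
          {p : α × α | p.1 < p.2 ∧ p.2 < x} :=
        Set.disjoint_left.mpr fun p hp hp' => lt_asymm hp.1 hp'.1
      have heq : m ({y : α | y < x} ×ˢ {y : α | y < x})
          = m {p : α × α | p.2 < p.1 ∧ p.1 < x} + m {p : α × α | p.1 < p.2 ∧ p.2 < x} := by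
        apply le_antisymm
        · calc m ({y : α | y < x} ×ˢ {y : α | y < x})
              ≤ m ({p : α × α | p.2 < p.1 ∧ p.1 < x} ∪ {p : α × α | p.1 < p.2 ∧ p.2 < x}
                  ∪ {p : α × α | p.1 = p.2}) := measure_mono hsub1
            _ ≤ m ({p : α × α | p.2 < p.1 ∧ p.1 < x} ∪ {p : α × α | p.1 < p.2 ∧ p.2 < x})
                + m {p : α × α | p.1 = p.2} := measure_union_le _ _
            _ = m ({p : α × α | p.2 < p.1 ∧ p.1 < x} ∪ {p : α × α | p.1 < p.2 ∧ p.2 < x}) := by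
                rw [hdiag0, add_zero]
            _ ≤ _ := measure_union_le _ _
        · rw [← measure_union hdisjT hT'm]
          exact measure_mono hsub2
      rw [← hSq, heq, hmT, hmT', two_mul]
    -- integrate the square identity and use Tonelli
    set I₂ : ℝ≥0∞ := ∫⁻ x, g x * g x ∂ν with hI₂_def
    have hkerm : Measurable (Function.uncurry fun x z => if z < x then g z else (0 : ℝ≥0∞)) := by
      have h1 : (Function.uncurry fun x z => if z < x then g z else (0 : ℝ≥0∞))
          = {p : α × α | p.2 < p.1}.indicator (fun p => g p.2) := by
        ext p
        simp only [Function.uncurry, Set.indicator_apply, Set.mem_setOf_eq]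
      rw [h1]
      exact (hgm.comp measurable_snd).indicator hL
    have hswap_int : ∫⁻ x, ∫⁻ z, (if z < x then g z else 0) ∂ν ∂ν
        = ∫⁻ z, g z * g' z ∂ν := by
      rw [lintegral_lintegral_swap hkerm.aemeasurable]
      apply lintegral_congr
      intro z
      have h1 : (fun x => if z < x then g z else (0 : ℝ≥0∞))
          = {x : α | z < x}.indicator (fun _ => g z) := by
        ext x
        simp only [Set.indicator_apply, Set.mem_setOf_eq]
      have hms : MeasurableSet {x : α | z < x} := measurable_prodMk_left hL'
      rw [h1, lintegral_indicator_const hms]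
    have hinner_meas : Measurable fun x => ∫⁻ z, (if z < x then g z else (0 : ℝ≥0∞)) ∂ν :=
      Measurable.lintegral_prod_right hkerm
    have hI₂_eq : I₂ = 2 * ∫⁻ z, g z * g' z ∂ν := by
      rw [hI₂_def]
      calc ∫⁻ x, g x * g x ∂ν
          = ∫⁻ x, 2 * ∫⁻ z, (if z < x then g z else 0) ∂ν ∂ν := lintegral_congr hsq
        _ = 2 * ∫⁻ x, ∫⁻ z, (if z < x then g z else 0) ∂ν ∂ν :=
            lintegral_const_mul 2 hinner_meas
        _ = 2 * ∫⁻ z, g z * g' z ∂ν := by rw [hswap_int]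
    have hIc : I₁ * c = I₂ + ∫⁻ z, g z * g' z ∂ν := by
      have h1 : ∀ z, g z * c = g z * g z + g z * g' z := by
        intro z; rw [← h_add z, mul_add]
      calc I₁ * c = ∫⁻ z, g z * c ∂ν := (lintegral_mul_const c hgm).symm
        _ = ∫⁻ z, (g z * g z + g z * g' z) ∂ν := lintegral_congr h1
        _ = I₂ + ∫⁻ z, g z * g' z ∂ν := by
            rw [lintegral_add_left (f := fun z => g z * g z) (hgm.mul hgm), hI₂_def]
    have h3 : 3 * I₂ = 2 * (I₁ * c) := by
      rw [hIc, mul_add, hI₂_eq]; ring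
    -- Case B: g is a.e. constant
    set t₀ : ℝ≥0∞ := essSup g ν with ht₀_def
    have hub : ∀ᵐ x ∂ν, g x ≤ t₀ := ENNReal.ae_le_essSup g
    have hkey : ∀ t : ℝ≥0∞, t < t₀ → ν {x | g x < t} = 0 := by
      intro t ht
      rcases hB t with h | h
      · exact h
      · exfalso
        have hae : ∀ᵐ x ∂ν, g x ≤ t := by
          have h2 : ∀ᵐ x ∂ν, ¬ t ≤ g x := by
            rw [ae_iff]; simpa using h
          exact h2.mono fun x hx => le_of_not_ge hx
        exact absurd (essSup_le_of_ae_le t hae) (not_le.mpr ht)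
    have hlow : ν {x | g x < t₀} = 0 := by
      have hsub : {x | g x < t₀}
          ⊆ ⋃ q : ℚ, {x | g x < Real.toNNReal q ∧ ((Real.toNNReal q : ℝ≥0∞)) < t₀} := by
        intro x hx
        obtain ⟨q, _, hq1, hq2⟩ := (ENNReal.lt_iff_exists_rat_btwn).mp hx
        exact Set.mem_iUnion.mpr ⟨q, hq1, hq2⟩
      refine measure_mono_null hsub (measure_iUnion_null fun q => ?_)
      by_cases hq : ((Real.toNNReal q : ℝ≥0∞)) < t₀
      · exact measure_mono_null (fun x hx => hx.1) (hkey _ hq)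
      · have hempty : {x | g x < Real.toNNReal q ∧ ((Real.toNNReal q : ℝ≥0∞)) < t₀}
            = (∅ : Set α) := by
          ext x
          simp only [Set.mem_setOf_eq, Set.mem_empty_iff_false, iff_false, not_and]
          exact fun _ => hq
        rw [hempty, measure_empty]
    have hconst : ∀ᵐ x ∂ν, g x = t₀ := by
      have h2 : ∀ᵐ x ∂ν, ¬ g x < t₀ := by rw [ae_iff]; simpa using hlow
      filter_upwards [hub, h2] with x hx1 hx2
      exact le_antisymm hx1 (not_lt.mp hx2)
    have hI₁c : I₁ = t₀ * c := by
      rw [hI₁_def, lintegral_congr_ae hconst, lintegral_const]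
    have hI₂c : I₂ = t₀ * t₀ * c := by
      have h2 : ∀ᵐ x ∂ν, g x * g x = t₀ * t₀ := hconst.mono fun x hx => by rw [hx]
      rw [hI₂_def, lintegral_congr_ae h2, lintegral_const]
    rw [hI₂c, hI₁c] at h3
    have e1 : t₀ * c + t₀ * c = c * c := by rw [← hI₁c]; exact hImc
    have hAfin : t₀ * c ≠ ⊤ := by rw [← hI₁c]; exact hI₁fin
    have h5 : 3 * ((t₀ * c) * (t₀ * c)) = 4 * ((t₀ * c) * (t₀ * c)) := by
      calc 3 * ((t₀ * c) * (t₀ * c)) = 3 * (t₀ * t₀ * c) * c := by ring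
        _ = 2 * ((t₀ * c) * c) * c := by rw [h3]
        _ = 2 * ((t₀ * c) * (c * c)) := by ring
        _ = 2 * ((t₀ * c) * (t₀ * c + t₀ * c)) := by rw [e1]
        _ = 4 * ((t₀ * c) * (t₀ * c)) := by ring
    have hAA : (t₀ * c) * (t₀ * c) ≠ ⊤ := ENNReal.mul_ne_top hAfin hAfin
    have hA0 : (t₀ * c) * (t₀ * c) = 0 := by
      by_contra hne
      exact absurd h5 (by rw [mul_comm (3 : ℝ≥0∞), mul_comm (4 : ℝ≥0∞)]; exact ne_of_lt (ENNReal.mul_lt_mul_right hne hAA (by norm_num)))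
    have hAz : t₀ * c = 0 := by
      rcases mul_eq_zero.mp hA0 with h | h <;> exact h
    rw [hAz, add_zero] at e1
    rcases mul_eq_zero.mp e1.symm with h | h <;> exact hc0 h

theorem exists_increasing {α : Type*} [TopologicalSpace α] [PolishSpace α] [CompactSpace α]
    [MeasurableSpace α] [BorelSpace α] [LinearOrder α]
    (hle : MeasurableSet {p : α × α | p.1 ≤ p.2})
    (κ : Measure α) [IsFiniteMeasure κ] [NullSingletonClass κ] (hκ : κ Set.univ ≠ 0) :
    ∃ f : (ℕ → Bool) → α, ∀ r s : ℕ → Bool, ∀ n : ℕ,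
      (∀ m, m < n → r m = s m) → r n = false → s n = true → f r < f s := by
  classical
  have hstep : ∀ K : Set α, MeasurableSet K → 0 < κ K →
      ∃ K₀ K₁ : Set α, (IsCompact K₀ ∧ MeasurableSet K₀ ∧ 0 < κ K₀ ∧ K₀ ⊆ K) ∧
        (IsCompact K₁ ∧ MeasurableSet K₁ ∧ 0 < κ K₁ ∧ K₁ ⊆ K) ∧
        ∀ x ∈ K₀, ∀ y ∈ K₁, x < y := by
    intro K hKm hKpos
    have h1 : (κ.restrict K) Set.univ ≠ 0 := by
      rw [Measure.restrict_apply_univ]; exact hKpos.ne'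
    obtain ⟨C₀, C₁, hC₀m, hC₁m, h0, h1', hord⟩ := exists_split hle (κ.restrict K) h1
    have hr0 : 0 < κ (C₀ ∩ K) := by rwa [← Measure.restrict_apply hC₀m]
    have hr1 : 0 < κ (C₁ ∩ K) := by rwa [← Measure.restrict_apply hC₁m]
    obtain ⟨K₀, hK₀sub, hK₀c, hK₀pos⟩ := (hC₀m.inter hKm).exists_lt_isCompact hr0
    obtain ⟨K₁, hK₁sub, hK₁c, hK₁pos⟩ := (hC₁m.inter hKm).exists_lt_isCompact hr1
    refine ⟨K₀, K₁,
      ⟨hK₀c, hK₀c.isClosed.measurableSet, hK₀pos, hK₀sub.trans Set.inter_subset_right⟩,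
      ⟨hK₁c, hK₁c.isClosed.measurableSet, hK₁pos, hK₁sub.trans Set.inter_subset_right⟩, ?_⟩
    intro x hx y hy
    exact hord x (hK₀sub hx).1 y (hK₁sub hy).1
  have hroot : IsCompact (Set.univ : Set α) ∧ MeasurableSet (Set.univ : Set α)
      ∧ 0 < κ Set.univ := ⟨isCompact_univ, MeasurableSet.univ, pos_iff_ne_zero.mpr hκ⟩
  have hstep' : ∀ N : {K : Set α // IsCompact K ∧ MeasurableSet K ∧ 0 < κ K},
      ∃ P : {K : Set α // IsCompact K ∧ MeasurableSet K ∧ 0 < κ K}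
          × {K : Set α // IsCompact K ∧ MeasurableSet K ∧ 0 < κ K},
        P.1.1 ⊆ N.1 ∧ P.2.1 ⊆ N.1 ∧ ∀ x ∈ P.1.1, ∀ y ∈ P.2.1, x < y := by
    rintro ⟨K, hKc, hKm, hKpos⟩
    obtain ⟨K₀, K₁, ⟨h0c, h0m, h0p, h0s⟩, ⟨h1c, h1m, h1p, h1s⟩, hord⟩ := hstep K hKm hKpos
    exact ⟨⟨⟨K₀, h0c, h0m, h0p⟩, ⟨K₁, h1c, h1m, h1p⟩⟩, h0s, h1s, hord⟩
  choose F hF₀ hF₁ hFord using hstep'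
  let P : List Bool → {K : Set α // IsCompact K ∧ MeasurableSet K ∧ 0 < κ K} := fun s =>
    List.rec ⟨Set.univ, hroot⟩ (fun b _ ih => cond b (F ih).2 (F ih).1) s
  have hPsub : ∀ (b : Bool) (s : List Bool), (P (b :: s)).1 ⊆ (P s).1 := by
    intro b s
    cases b
    · exact hF₀ (P s)
    · exact hF₁ (P s)
  let pre : (ℕ → Bool) → ℕ → List Bool := fun r n => Nat.rec [] (fun m ih => r m :: ih) n
  have hpre : ∀ r n, pre r (n + 1) = r n :: pre r n := fun r n => rfl
  have hnonempty : ∀ r : ℕ → Bool, (⋂ n, (P (pre r n)).1).Nonempty := by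
    intro r
    apply IsCompact.nonempty_iInter_of_sequence_nonempty_isCompact_isClosed
    · intro n
      rw [hpre]
      exact hPsub _ _
    · intro n
      exact nonempty_of_measure_ne_zero (P (pre r n)).2.2.2.ne'
    · exact (P (pre r 0)).2.1
    · intro n
      exact (P (pre r n)).2.1.isClosed
  choose f hf using hnonempty
  refine ⟨f, ?_⟩
  intro r s n hagree hr hs
  have hpre_eq : ∀ k : ℕ, (∀ m, m < k → r m = s m) → pre r k = pre s k := by
    intro k
    induction k with
    | zero => intro _; rfl
    | succ j ih =>
      intro hag
      rw [hpre, hpre, hag j (Nat.lt_succ_self j), ih fun m hm => hag m (hm.trans (Nat.lt_succ_self j))]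
  have hu : pre r n = pre s n := hpre_eq n hagree
  have hfr : f r ∈ (P (pre r (n + 1))).1 := Set.mem_iInter.mp (hf r) (n + 1)
  have hfs : f s ∈ (P (pre s (n + 1))).1 := Set.mem_iInter.mp (hf s) (n + 1)
  rw [hpre, hr] at hfr
  rw [hpre, hs, ← hu] at hfs
  exact hFord (P (pre r n)) _ hfr _ hfs

end IncreasingCantorAux

/-- The paper's Lemma: if a Polish space carries a linear order with Borel
graph, then every uncountable Borel subset contains an increasing copy of
Cantor space (increasing with respect to the lexicographic order on
`ℕ → Bool`, where `false < true`). -/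
theorem increasing_cantor_embedding_into_uncountable_borel
    {M : Type*} [TopologicalSpace M] [PolishSpace M]
    [MeasurableSpace M] [BorelSpace M] [LinearOrder M]
    (hle_borel : MeasurableSet {p : M × M | p.1 ≤ p.2})
    (X : Set M) (hX_borel : MeasurableSet X) (hX_unc : ¬ X.Countable) :
    ∃ f : (ℕ → Bool) → M,
      Set.range f ⊆ X ∧
      (∀ r s : ℕ → Bool, r ≠ s →
        ∀ n : ℕ, (∀ m : ℕ, m < n → r m = s m) → r n ≠ s n → r n < s n →
          f r < f s) ∧
      Function.Injective f := by
  classical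
  haveI := hX_borel.standardBorel
  have hXunc' : ¬ Countable (↥X) := fun h => hX_unc (Set.countable_coe_iff.mp h)
  let e : ↥X ≃ᵐ (ℕ → Bool) := PolishSpace.measurableEquivNatBoolOfNotCountable hXunc'
  let φ : (ℕ → Bool) → M := fun z => (e.symm z : M)
  have hφmeas : Measurable φ := measurable_subtype_coe.comp e.symm.measurable
  have hφinj : Function.Injective φ := Subtype.val_injective.comp e.symm.injective
  let LO : LinearOrder (ℕ → Bool) := LinearOrder.lift' φ hφinj
  have hle' : MeasurableSet {p : (ℕ → Bool) × (ℕ → Bool) | φ p.1 ≤ φ p.2} := by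
    have h1 : {p : (ℕ → Bool) × (ℕ → Bool) | φ p.1 ≤ φ p.2}
        = (Prod.map φ φ) ⁻¹' {p : M × M | p.1 ≤ p.2} := rfl
    rw [h1]
    exact (hφmeas.prodMap hφmeas) hle_borel
  have hRunc : ¬ Countable ℝ := fun h => Cardinal.not_countable_real Set.countable_univ
  let E : ℝ ≃ᵐ (ℕ → Bool) := PolishSpace.measurableEquivNatBoolOfNotCountable hRunc
  let μ0 : Measure ℝ := volume.restrict (Set.Icc 0 1)
  haveI : IsFiniteMeasure μ0 := ⟨by
    rw [Measure.restrict_apply_univ]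
    simp [Real.volume_Icc]⟩
  let κ : Measure (ℕ → Bool) := Measure.map E μ0
  haveI : IsFiniteMeasure κ := Measure.isFiniteMeasure_map μ0 E
  haveI : NullSingletonClass κ := by
    constructor
    intro x
    have hxm : MeasurableSet ({x} : Set (ℕ → Bool)) := isClosed_singleton.measurableSet
    rw [Measure.map_apply E.measurable hxm]
    have hpre : E ⁻¹' {x} = {E.symm x} := by
      ext y
      simp only [Set.mem_preimage, Set.mem_singleton_iff]
      exact ⟨fun h => by rw [← h, MeasurableEquiv.symm_apply_apply],
        fun h => by rw [h, MeasurableEquiv.apply_symm_apply]⟩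
    rw [hpre, Measure.restrict_apply (measurableSet_singleton _)]
    exact measure_mono_null Set.inter_subset_left (measure_singleton _)
  have hκuniv : κ Set.univ ≠ 0 := by
    rw [Measure.map_apply E.measurable MeasurableSet.univ]
    rw [Set.preimage_univ, Measure.restrict_apply_univ]
    simp [Real.volume_Icc]
  haveI : PolishSpace (ℕ → Bool) :=
    @instPolishSpaceOfSeparableSpaceOfIsCompletelyMetrizableSpace _ _ inferInstance inferInstance
  obtain ⟨f₀, hf₀⟩ := @IncreasingCantorAux.exists_increasing (ℕ → Bool) _ _ _ _ _ LO hle' κ _ _ hκuniv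
  refine ⟨φ ∘ f₀, ?_, ?_, ?_⟩
  · rintro y ⟨r, rfl⟩
    exact (e.symm (f₀ r)).2
  · intro r s _ n hagree hne hlt
    obtain ⟨hrf, hst⟩ := Bool.lt_iff.mp hlt
    exact hf₀ r s n hagree hrf hst
  · intro r s h
    by_contra hne
    have hex : ∃ n, r n ≠ s n := by
      by_contra h'
      push_neg at h'
      exact hne (funext h')
    have hfeq : f₀ r = f₀ s := hφinj h
    set n := Nat.find hex with hn_def
    have hn : r n ≠ s n := Nat.find_spec hex
    have hagree : ∀ m, m < n → r m = s m := fun m hm => not_not.mp (Nat.find_min hex hm)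
    cases hrn : r n <;> cases hsn : s n
    · exact hn (hrn.trans hsn.symm)
    · exact (hf₀ r s n hagree hrn hsn).ne h
    · exact (hf₀ s r n (fun m hm => (hagree m hm).symm) hsn hrn).ne h.symm
    · exact hn (hrn.trans hsn.symm)
end

section
/- Let M be a Polish space equipped with a binary operation + : M × M → M that is Borel measurable, and with a linear order ≤ satisfying: for all x, y, x ≤ y if and only if there exists z with x + z = y. Then the graph {(x, y) : M × M | x ≤ y} is a Borel subset of M × M. -/
open Topology MeasureTheory

/-- If a Polish space carries a Borel binary operation `add` and a linear order
defined from it by `x ≤ y ↔ ∃ z, add (x, z) = y`, then the graph of the order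
is Borel (both it and its complement are analytic, so Suslin's theorem
applies). -/
theorem order_graph_borel_of_borel_add
    {M : Type*} [TopologicalSpace M] [PolishSpace M]
    [MeasurableSpace M] [BorelSpace M] [LinearOrder M]
    (add : M × M → M) (hadd_borel : Measurable add)
    (hord : ∀ x y : M, x ≤ y ↔ ∃ z : M, add (x, z) = y) :
    MeasurableSet {p : M × M | p.1 ≤ p.2} := by
  -- The graph is the projection of a Borel set, hence analytic.
  have h1 : AnalyticSet {p : M × M | p.1 ≤ p.2} := by
    have hs : MeasurableSet {t : (M × M) × M | add (t.1.1, t.2) = t.1.2} :=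
      (hadd_borel.comp ((measurable_fst.comp measurable_fst).prodMk measurable_snd)
        |>.prodMk (measurable_snd.comp measurable_fst)) isClosed_diagonal.measurableSet
    have := hs.analyticSet_image (measurable_fst (α := M × M) (β := M))
    convert this using 1
    ext p
    simp only [Set.mem_setOf_eq, Set.mem_image, hord]
    constructor
    · rintro ⟨z, hz⟩; exact ⟨⟨p, z⟩, hz, rfl⟩
    · rintro ⟨⟨q, z⟩, hz, rfl⟩; exact ⟨z, hz⟩
  -- The complement {p | p.2 < p.1} is also a projection of a Borel set.
  have h2 : AnalyticSet {p : M × M | p.1 ≤ p.2}ᶜ := by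
    have hs : MeasurableSet {t : (M × M) × M |
        add (t.1.2, t.2) = t.1.1 ∧ t.1.1 ≠ t.1.2} := by
      apply MeasurableSet.inter
      · exact (hadd_borel.comp ((measurable_snd.comp measurable_fst).prodMk measurable_snd)
          |>.prodMk (measurable_fst.comp measurable_fst)) isClosed_diagonal.measurableSet
      · exact (((measurable_fst.comp measurable_fst).prodMk
          (measurable_snd.comp measurable_fst)) isClosed_diagonal.measurableSet).compl
    have := hs.analyticSet_image (measurable_fst (α := M × M) (β := M))
    convert this using 1
    ext p
    simp only [Set.mem_compl_iff, Set.mem_setOf_eq, not_le, Set.mem_image]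
    constructor
    · intro hlt
      obtain ⟨z, hz⟩ := (hord p.2 p.1).1 hlt.le
      exact ⟨⟨p, z⟩, ⟨hz, hlt.ne'⟩, rfl⟩
    · rintro ⟨⟨q, z⟩, ⟨hz, hne⟩, rfl⟩
      exact lt_of_le_of_ne ((hord q.2 q.1).2 ⟨z, hz⟩) (Ne.symm hne)
  exact h1.measurableSet_of_compl h2
end

section
/- Let M be an uncountable Polish space equipped with a linear order ≤ whose graph {(x, y) : M × M | x ≤ y} is a Borel subset of M × M. Then there exists c ∈ M such that the initial segment {x : M | x ≤ c} is uncountable. -/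
open Topology MeasureTheory

/-- In an uncountable Polish space with a Borel linear order, some initial
segment is uncountable (the cut of countable initial segments is proper). -/
theorem exists_uncountable_initial_segment
    {M : Type*} [TopologicalSpace M] [PolishSpace M] [Uncountable M]
    [MeasurableSpace M] [BorelSpace M] [LinearOrder M]
    (hle_borel : MeasurableSet {p : M × M | p.1 ≤ p.2}) :
    ∃ c : M, ¬ {x : M | x ≤ c}.Countable := by
  by_contra h
  push_neg at h
  -- every initial segment is countable
  have hcnt : ∀ c : M, ({x : M | x ≤ c}).Countable := h
  -- Borel isomorphism with ℝ
  have hM : ¬ Countable M := not_countable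
  have hR : ¬ Countable ℝ := not_countable
  let e : M ≃ᵐ ℝ := PolishSpace.measurableEquivOfNotCountable hM hR
  -- the pushforward of Lebesgue measure on [0,1]
  let μ : Measure M := (volume.restrict (Set.Icc (0:ℝ) 1)).map e.symm
  have hμuniv : μ Set.univ = 1 := by
    simp [μ, MeasurableEquiv.map_apply, Real.volume_Icc]
  have hsing : ∀ c : M, μ {c} = 0 := by
    intro c
    have : μ {c} = (volume.restrict (Set.Icc (0:ℝ) 1)) (e.symm ⁻¹' {c}) := by
      simp [μ, MeasurableEquiv.map_apply]
    rw [this]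
    have hpre : e.symm ⁻¹' {c} = {e c} := by
      ext x
      simp only [Set.mem_preimage, Set.mem_singleton_iff]
      constructor
      · intro hx; rw [← hx]; simp
      · rintro rfl; simp
    rw [hpre, Measure.restrict_apply (measurableSet_singleton _)]
    exact measure_mono_null Set.inter_subset_left Real.volume_singleton
  have hnull : ∀ s : Set M, s.Countable → μ s = 0 := by
    intro s hs
    have hrw : s = ⋃ x ∈ s, {x} := (Set.biUnion_of_singleton s).symm
    rw [hrw]
    exact (measure_biUnion_null_iff hs).mpr fun c _ => hsing c
  have hsfin : IsFiniteMeasure μ := ⟨by rw [hμuniv]; exact ENNReal.one_lt_top⟩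
  -- Fubini on the order relation
  have h1 : (μ.prod μ) {p : M × M | p.1 ≤ p.2} = 0 := by
    rw [Measure.prod_apply_symm hle_borel]
    have : ∀ y : M, μ ((fun x => (x, y)) ⁻¹' {p : M × M | p.1 ≤ p.2}) = 0 := by
      intro y
      exact hnull _ (hcnt y)
    simp only [this]
    simp
  have h2 : (μ.prod μ) {p : M × M | p.1 ≤ p.2} = 1 := by
    rw [Measure.prod_apply hle_borel]
    have : ∀ x : M, μ (Prod.mk x ⁻¹' {p : M × M | p.1 ≤ p.2}) = 1 := by
      intro x
      have hc : μ {y : M | ¬ x ≤ y} = 0 := by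
        apply hnull
        exact (hcnt x).mono (fun y hy => le_of_not_ge hy)
      have : Prod.mk x ⁻¹' {p : M × M | p.1 ≤ p.2} = {y : M | x ≤ y} := rfl
      rw [this]
      have := measure_add_measure_compl (μ := μ)
        (s := {y : M | x ≤ y}) (hle_borel.preimage (measurable_prodMk_left))
      rw [hμuniv] at this
      have hcompl : {y : M | x ≤ y}ᶜ = {y : M | ¬ x ≤ y} := rfl
      rw [hcompl, hc, add_zero] at this
      exact this
    simp only [this]
    simp [hμuniv]
  rw [h1] at h2
  exact zero_ne_one h2
end

section
/- Let (M, d) be a complete metric space and let s : Finset ℕ → M be an injective function such that for every n ≥ 1 and every S ⊆ {0, 1, …, n−1}, d(s(S), s(S ∪ {n})) < 5^{−n} · min{ d(s(T), s(U)) : T, U ⊆ {0, 1, …, n−1}, T ≠ U }. Then: (1) for every set A ⊆ ℕ, the sequence N ↦ s(A ∩ {0, 1, …, N−1}) converges to a limit z(A) ∈ M; and (2) the map A ↦ z(A) from subsets of ℕ to M is injective. -/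
open Topology Filter

open scoped Classical

private noncomputable def Fd (A : Set ℕ) (N : ℕ) : Finset ℕ :=
  (Finset.range N).filter (· ∈ A)

private lemma Fd_subset (A : Set ℕ) (N : ℕ) : Fd A N ⊆ Finset.range N :=
  Finset.filter_subset _ _

private lemma Fd_succ (A : Set ℕ) (N : ℕ) :
    Fd A (N + 1) = if N ∈ A then insert N (Fd A N) else Fd A N := by
  by_cases h : N ∈ A <;> simp [Fd, Finset.range_add_one, Finset.filter_insert, h]

private lemma step_bound {M : Type*} [MetricSpace M] (s : Finset ℕ → M)
    (hclose : ∀ n : ℕ, 1 ≤ n → ∀ S ⊆ Finset.range n,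
      ∀ T ⊆ Finset.range n, ∀ U ⊆ Finset.range n, T ≠ U →
        dist (s S) (s (insert n S)) < (5 : ℝ) ^ (-(n : ℤ)) * dist (s T) (s U))
    (A : Set ℕ) {m : ℕ} (hm : 1 ≤ m) {T U : Finset ℕ}
    (hT : T ⊆ Finset.range m) (hU : U ⊆ Finset.range m) (hTU : T ≠ U) :
    dist (s (Fd A m)) (s (Fd A (m + 1))) ≤ (1/5 : ℝ) ^ m * dist (s T) (s U) := by
  rw [Fd_succ]
  by_cases h : m ∈ A
  · rw [if_pos h]
    have h1 := hclose m hm (Fd A m) (Fd_subset A m) T hT U hU hTU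
    have h5 : (5 : ℝ) ^ (-(m : ℤ)) = (1/5 : ℝ) ^ m := by
      rw [zpow_neg, zpow_natCast, one_div, inv_pow]
    rw [h5] at h1
    exact h1.le
  · rw [if_neg h, dist_self]
    positivity

private lemma tail_bound {M : Type*} [MetricSpace M] (s : Finset ℕ → M)
    (hclose : ∀ n : ℕ, 1 ≤ n → ∀ S ⊆ Finset.range n,
      ∀ T ⊆ Finset.range n, ∀ U ⊆ Finset.range n, T ≠ U →
        dist (s S) (s (insert n S)) < (5 : ℝ) ^ (-(n : ℤ)) * dist (s T) (s U))
    (A : Set ℕ) {l : M}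
    (hl : Tendsto (fun N => s (Fd A N)) atTop (𝓝 l)) (n : ℕ) {T U : Finset ℕ}
    (hT : T ⊆ Finset.range (n + 1)) (hU : U ⊆ Finset.range (n + 1)) (hTU : T ≠ U) :
    dist (s (Fd A (n + 1))) l ≤ dist (s T) (s U) / 4 := by
  set D := dist (s T) (s U) with hDdef
  have hD0 : 0 ≤ D := dist_nonneg
  have hg : Tendsto (fun k => s (Fd A (k + (n + 1)))) atTop (𝓝 l) :=
    hl.comp (tendsto_add_atTop_nat (n + 1))
  have hstep : ∀ k : ℕ,
      dist (s (Fd A (k + (n + 1)))) (s (Fd A (k + 1 + (n + 1)))) ≤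
        (D * (1/5 : ℝ) ^ (n + 1)) * (1/5 : ℝ) ^ k := by
    intro k
    have hT' : T ⊆ Finset.range (k + (n + 1)) :=
      hT.trans (Finset.range_subset_range.mpr (by omega))
    have hU' : U ⊆ Finset.range (k + (n + 1)) :=
      hU.trans (Finset.range_subset_range.mpr (by omega))
    have h1 := step_bound s hclose A (m := k + (n + 1)) (by omega) hT' hU' hTU
    rw [show k + 1 + (n + 1) = (k + (n + 1)) + 1 from by omega]
    calc dist (s (Fd A (k + (n + 1)))) (s (Fd A (k + (n + 1) + 1)))
        ≤ (1/5 : ℝ) ^ (k + (n + 1)) * D := h1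
      _ = (D * (1/5 : ℝ) ^ (n + 1)) * (1/5 : ℝ) ^ k := by rw [pow_add]; ring
  have key := dist_le_of_le_geometric_of_tendsto₀ (1/5 : ℝ)
    (D * (1/5 : ℝ) ^ (n + 1)) (by norm_num) hstep hg
  rw [show (0 : ℕ) + (n + 1) = n + 1 from by omega] at key
  have hp : (1/5 : ℝ) ^ (n + 1) ≤ (1/5 : ℝ) ^ 1 :=
    pow_le_pow_of_le_one (by norm_num) (by norm_num) (by omega)
  have : D * (1/5 : ℝ) ^ (n + 1) / (1 - 1/5) ≤ D / 4 := by
    rw [div_le_div_iff₀ (by norm_num) (by norm_num)]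
    nlinarith
  linarith

/-- The 'routine to verify' step: if the values `s S` of an injective function
on finite sets satisfy the rapid-closeness condition (`d(s S, s (S ∪ {n}))` is
less than `5⁻ⁿ` times the minimum distance between values on distinct subsets
of `{0, …, n−1}`), then the partial "sums" along every `A ⊆ ℕ` converge, and
the map sending `A` to the limit is injective. -/
theorem limits_exist_and_injective
    {M : Type*} [MetricSpace M] [CompleteSpace M]
    (s : Finset ℕ → M) (hs_inj : Function.Injective s)
    (hclose : ∀ n : ℕ, 1 ≤ n → ∀ S ⊆ Finset.range n,
      ∀ T ⊆ Finset.range n, ∀ U ⊆ Finset.range n, T ≠ U →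
        dist (s S) (s (insert n S)) < (5 : ℝ) ^ (-(n : ℤ)) * dist (s T) (s U)) :
    ∃ z : Set ℕ → M,
      (∀ A : Set ℕ,
        Tendsto (fun N : ℕ => s ((Finset.range N).filter (· ∈ A)))
          atTop (nhds (z A))) ∧
      Function.Injective z := by
  have conv : ∀ A : Set ℕ, ∃ l, Tendsto (fun N => s (Fd A N)) atTop (𝓝 l) := by
    intro A
    apply cauchySeq_tendsto_of_complete
    apply cauchySeq_of_le_geometric (1/5 : ℝ) (dist (s ∅) (s {0})) (by norm_num)
    intro N
    rcases Nat.eq_zero_or_pos N with h0 | h1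
    · subst h0
      rw [Fd_succ]
      by_cases h : 0 ∈ A
      · rw [if_pos h]
        have h0e : Fd A 0 = ∅ := by simp [Fd]
        rw [h0e]
        norm_num
      · rw [if_neg h, dist_self]
        positivity
    · have hU : ({0} : Finset ℕ) ⊆ Finset.range N := by
        simp [Finset.singleton_subset_iff, Finset.mem_range]; omega
      have hTU : (∅ : Finset ℕ) ≠ ({0} : Finset ℕ) := (Finset.singleton_ne_empty 0).symm
      have := step_bound s hclose A h1 (Finset.empty_subset _) hU hTU
      rw [mul_comm] at this
      exact this
  refine ⟨fun A => (conv A).choose, fun A => (conv A).choose_spec, ?_⟩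
  intro A B hAB
  by_contra hne
  have hex : ∃ n, ¬(n ∈ A ↔ n ∈ B) := by
    by_contra h
    push_neg at h
    exact hne (Set.ext h)
  set n := Nat.find hex with hn_def
  have hn : ¬(n ∈ A ↔ n ∈ B) := Nat.find_spec hex
  have hmin : ∀ m < n, (m ∈ A ↔ m ∈ B) := fun m hm => not_not.mp (Nat.find_min hex hm)
  have hS : Fd A n = Fd B n := by
    ext x
    simp only [Fd, Finset.mem_filter, Finset.mem_range]
    exact and_congr_right fun hx => hmin x hx
  set S := Fd A n with hSdef
  have hnS : n ∉ S := fun h => Finset.notMem_range_self (Fd_subset A n h)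
  have hne' : S ≠ insert n S := fun h => hnS (h ▸ Finset.mem_insert_self n S)
  set D := dist (s S) (s (insert n S)) with hDdef
  have hD : 0 < D := dist_pos.mpr fun h => hne' (hs_inj h)
  have hTr : S ⊆ Finset.range (n + 1) :=
    (Fd_subset A n).trans (Finset.range_subset_range.mpr (by omega))
  have hUr : insert n S ⊆ Finset.range (n + 1) :=
    Finset.insert_subset (Finset.mem_range.mpr (by omega)) hTr
  have tA : dist (s (Fd A (n + 1))) ((conv A).choose) ≤ D / 4 :=
    tail_bound s hclose A ((conv A).choose_spec) n hTr hUr hne'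
  have tB : dist (s (Fd B (n + 1))) ((conv B).choose) ≤ D / 4 :=
    tail_bound s hclose B ((conv B).choose_spec) n hTr hUr hne'
  have hdist : dist (s (Fd A (n + 1))) (s (Fd B (n + 1))) = D := by
    rw [Fd_succ, Fd_succ, ← hS, ← hSdef]
    by_cases h : n ∈ A
    · have hB : n ∉ B := fun hB => hn ⟨fun _ => hB, fun _ => h⟩
      rw [if_pos h, if_neg hB, dist_comm]
    · have hB : n ∈ B := by
        by_contra hB
        exact hn ⟨fun hA => absurd hA h, fun hBB => absurd hBB hB⟩
      rw [if_neg h, if_pos hB]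
  have htri : D ≤ dist (s (Fd A (n + 1))) ((conv A).choose) +
      dist ((conv A).choose) ((conv B).choose) +
      dist ((conv B).choose) (s (Fd B (n + 1))) := by
    rw [← hdist]
    exact dist_triangle4 _ _ _ _
  have hAB' : (conv A).choose = (conv B).choose := hAB
  rw [hAB', dist_self] at htri
  rw [hAB'] at tA
  linarith [dist_comm (s (Fd B (n + 1))) ((conv B).choose)]
end

section
/- Let M be a linearly ordered commutative semiring in which addition is strictly monotone, and let y : ℕ → M satisfy 0 < y(0) and 5·y(i) < y(i+1) for all i. Let A, B ⊆ ℕ be disjoint finite sets with A nonempty, let m be the maximum element of A, and suppose every element of B is less than m. Then 2·(∑_{i ∈ B} y(i)) + y(m) < 2·(∑_{i ∈ A} y(i)). -/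
/-- The key additive growth inequality: if `y` grows faster than powers of 5,
`A` and `B` are disjoint finite sets, `m = max A`, and every element of `B` is
below `m`, then `2·(∑_{i∈B} y i) + y m < 2·(∑_{i∈A} y i)`. -/
theorem additive_growth_inequality
    {M : Type*} [CommSemiring M] [LinearOrder M]
    (hadd_mono : ∀ a : M, StrictMono (fun x : M => a + x))
    (hadd_mono' : ∀ a : M, StrictMono (fun x : M => x + a))
    (y : ℕ → M) (hy0 : 0 < y 0) (hy : ∀ i : ℕ, 5 * y i < y (i + 1))
    (A B : Finset ℕ) (hAB : Disjoint A B) (hA : A.Nonempty)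
    (m : ℕ) (hmA : m ∈ A) (hmax : ∀ a ∈ A, a ≤ m)
    (hB : ∀ b ∈ B, b < m) :
    2 * (∑ i ∈ B, y i) + y m < 2 * ∑ i ∈ A, y i := by
  -- basic order facts from the monotonicity hypotheses
  have hlt_l : ∀ a : M, ∀ ⦃b c : M⦄, b < c → a + b < a + c := fun a _ _ h => hadd_mono a h
  have hlt_r : ∀ a : M, ∀ ⦃b c : M⦄, b < c → b + a < c + a := fun a _ _ h => hadd_mono' a h
  have hle_l : ∀ a : M, ∀ ⦃b c : M⦄, b ≤ c → a + b ≤ a + c :=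
    fun a _ _ h => (hadd_mono a).monotone h
  have hle_r : ∀ a : M, ∀ ⦃b c : M⦄, b ≤ c → b + a ≤ c + a :=
    fun a _ _ h => (hadd_mono' a).monotone h
  have haddpos : ∀ {a b : M}, 0 < a → 0 < b → 0 < a + b := by
    intro a b ha hb
    calc (0 : M) < a := ha
      _ = a + 0 := (add_zero a).symm
      _ < a + b := hlt_l a hb
  have haddnn : ∀ {a b : M}, 0 ≤ a → 0 ≤ b → 0 ≤ a + b := by
    intro a b ha hb
    calc (0 : M) = 0 + 0 := (add_zero 0).symm
      _ ≤ 0 + b := hle_l 0 hb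
      _ ≤ a + b := hle_r b ha
  -- positivity of y
  have hpos : ∀ i, 0 < y i := by
    intro i
    induction i with
    | zero => exact hy0
    | succ n ih =>
      refine lt_trans ?_ (hy n)
      have h5 : 5 * y n = y n + (y n + (y n + (y n + y n))) := by ring
      rw [h5]
      exact haddpos ih (haddpos ih (haddpos ih (haddpos ih ih)))
  -- sums of y are nonnegative
  have sum_nonneg : ∀ s : Finset ℕ, (0 : M) ≤ ∑ i ∈ s, y i := by
    intro s
    exact Finset.sum_induction y (fun z => (0:M) ≤ z)
      (fun a b ha hb => haddnn ha hb) le_rfl (fun i _ => (hpos i).le)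
  -- key growth bound: 4 * ∑_{i<k} y i < y k
  have key : ∀ k : ℕ, 4 * (∑ i ∈ Finset.range k, y i) < y k := by
    intro k
    induction k with
    | zero => simpa using hy0
    | succ n ih =>
      rw [Finset.sum_range_succ]
      have h1 : 4 * ((∑ i ∈ Finset.range n, y i) + y n)
          = 4 * (∑ i ∈ Finset.range n, y i) + 4 * y n := by ring
      rw [h1]
      refine lt_trans (hlt_r (4 * y n) ih) ?_
      have h2 : y n + 4 * y n = 5 * y n := by ring
      rw [h2]; exact hy n
  -- 2 * ∑_B < y m
  have hBsub : B ⊆ Finset.range m := fun b hb => Finset.mem_range.2 (hB b hb)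
  have hsplit := Finset.sum_sdiff (f := y) hBsub
  have hBle : (∑ i ∈ B, y i) ≤ ∑ i ∈ Finset.range m, y i := by
    rw [← hsplit]
    calc (∑ i ∈ B, y i) = 0 + ∑ i ∈ B, y i := (zero_add _).symm
      _ ≤ (∑ i ∈ Finset.range m \ B, y i) + ∑ i ∈ B, y i :=
        hle_r _ (sum_nonneg _)
  have h2B : 2 * (∑ i ∈ B, y i) < y m := by
    set s := ∑ i ∈ Finset.range m, y i with hs
    have hsnn : (0:M) ≤ s := sum_nonneg _
    have h2le : 2 * (∑ i ∈ B, y i) ≤ 2 * s := by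
      have := hle_r (∑ i ∈ B, y i) hBle
      have h2 := hle_l s hBle
      calc 2 * (∑ i ∈ B, y i) = (∑ i ∈ B, y i) + (∑ i ∈ B, y i) := two_mul _
        _ ≤ s + (∑ i ∈ B, y i) := hle_r _ hBle
        _ ≤ s + s := hle_l s hBle
        _ = 2 * s := (two_mul s).symm
    have h24 : 2 * s ≤ 4 * s := by
      have : (0:M) ≤ 2 * s := by
        rw [two_mul]; exact haddnn hsnn hsnn
      calc 2 * s = 2 * s + 0 := (add_zero _).symm
        _ ≤ 2 * s + 2 * s := hle_l _ this
        _ = 4 * s := by ring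
    exact lt_of_le_of_lt (le_trans h2le h24) (key m)
  -- y m ≤ ∑_A
  have hmle : y m ≤ ∑ i ∈ A, y i := by
    rw [← Finset.add_sum_erase A y hmA]
    calc y m = y m + 0 := (add_zero _).symm
      _ ≤ y m + ∑ i ∈ A.erase m, y i := hle_l _ (sum_nonneg _)
  -- conclude
  calc 2 * (∑ i ∈ B, y i) + y m < y m + y m := hlt_r (y m) h2B
    _ = 2 * y m := (two_mul _).symm
    _ ≤ 2 * ∑ i ∈ A, y i := by
      rw [two_mul, two_mul]
      exact le_trans (hle_r _ hmle) (hle_l _ hmle)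
end

section
/- Let μ be the coin-flipping measure on Cantor space ℕ → Bool. Let F ⊆ ℕ be a finite set with |F| = k, and let E ⊆ (ℕ → Bool) be a measurable set such that any two elements of E that agree at every coordinate outside F are equal (i.e., the restriction map r ↦ r|_{ℕ∖F} is injective on E). Then μ(E) ≤ 2^{−k}. -/
open MeasureTheory

private lemma xor_eq_iff' : ∀ a b c : Bool, (xor a b = c ↔ b = xor a c) := by decide

private lemma xor_cancel' : ∀ a b c : Bool, xor a c = xor b c → a = b := by decide

/-- With respect to the coin-flipping measure on Cantor space (characterized by
its values `2^{-|F|}` on cylinders), a measurable set on which the restriction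
map to the coordinates outside a `k`-element finite set `F` is injective has
measure at most `2^{-k}`. -/
theorem measure_le_of_injective_restriction
    (μ : Measure (ℕ → Bool)) [IsProbabilityMeasure μ]
    (hμ : ∀ (F : Finset ℕ) (g : ℕ → Bool),
      μ {r : ℕ → Bool | ∀ i ∈ F, r i = g i} = (2 : ENNReal)⁻¹ ^ F.card)
    (F : Finset ℕ) (k : ℕ) (hF : F.card = k)
    (E : Set (ℕ → Bool)) (hE : MeasurableSet E)
    (hinj : ∀ r₁ ∈ E, ∀ r₂ ∈ E, (∀ n ∉ F, r₁ n = r₂ n) → r₁ = r₂) :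
    μ E ≤ (2 : ENNReal)⁻¹ ^ k := by
  classical
  -- the π-system of cylinders
  set C : Set (Set (ℕ → Bool)) :=
    {S | ∃ (F' : Finset ℕ) (g : ℕ → Bool), S = {r : ℕ → Bool | ∀ i ∈ F', r i = g i}} with hC_def
  have hcylmeas : ∀ (F' : Finset ℕ) (g : ℕ → Bool),
      MeasurableSet {r : ℕ → Bool | ∀ i ∈ F', r i = g i} := by
    intro F' g
    have : {r : ℕ → Bool | ∀ i ∈ F', r i = g i} = ⋂ i ∈ F', {r : ℕ → Bool | r i = g i} := by
      ext r; simp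
    rw [this]
    refine MeasurableSet.biInter F'.countable_toSet fun i _ => ?_
    have : {r : ℕ → Bool | r i = g i} = (fun r : ℕ → Bool => r i) ⁻¹' {g i} := by ext r; simp
    rw [this]
    exact (measurable_pi_apply i) (MeasurableSet.singleton (g i))
  have hgen : (inferInstance : MeasurableSpace (ℕ → Bool)) = MeasurableSpace.generateFrom C := by
    apply le_antisymm
    · rw [show (inferInstance : MeasurableSpace (ℕ → Bool)) = MeasurableSpace.pi from rfl,
        MeasurableSpace.pi]
      apply iSup_le
      intro i
      intro s hs
      obtain ⟨t, -, rfl⟩ := hs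
      have : (fun r : ℕ → Bool => r i) ⁻¹' t = ⋃ b ∈ t, {r : ℕ → Bool | ∀ j ∈ ({i} : Finset ℕ), r j = b} := by
        ext r; simp [Set.mem_preimage]
      rw [this]
      exact MeasurableSet.biUnion t.to_countable fun b _ =>
        MeasurableSpace.measurableSet_generateFrom ⟨{i}, fun _ => b, rfl⟩
    · apply MeasurableSpace.generateFrom_le
      rintro s ⟨F', g, rfl⟩
      exact hcylmeas F' g
  have hpi : IsPiSystem C := by
    rintro s ⟨F₁, g₁, rfl⟩ t ⟨F₂, g₂, rfl⟩ ⟨r₀, hr₀₁, hr₀₂⟩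
    refine ⟨F₁ ∪ F₂, fun i => if i ∈ F₁ then g₁ i else g₂ i, ?_⟩
    ext r
    simp only [Set.mem_inter_iff, Set.mem_setOf_eq, Finset.mem_union]
    constructor
    · rintro ⟨h1, h2⟩ i hi
      by_cases hiF₁ : i ∈ F₁
      · simp [hiF₁, h1 i hiF₁]
      · rcases hi with hi | hi
        · exact absurd hi hiF₁
        · simp [hiF₁, h2 i hi]
    · intro h
      constructor
      · intro i hi
        have := h i (Or.inl hi); simpa [hi] using this
      · intro i hi
        have := h i (Or.inr hi)
        by_cases hiF₁ : i ∈ F₁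
        · have hg : g₁ i = g₂ i := by rw [← hr₀₁ i hiF₁, hr₀₂ i hi]
          simpa [hiF₁, hg] using this
        · simpa [hiF₁] using this
  -- flip maps
  have main : ∀ σ : ℕ → Bool,
      μ ((fun r i => if i ∈ F then xor (σ i) (r i) else r i) ⁻¹' E) = μ E := by
    intro σ
    set T : (ℕ → Bool) → (ℕ → Bool) := fun r i => if i ∈ F then xor (σ i) (r i) else r i with hT_def
    have hT : Measurable T := by
      apply measurable_pi_lambda
      intro i
      by_cases hi : i ∈ F
      · simp only [hT_def, hi, if_true]
        exact (measurable_from_top (f := fun b => xor (σ i) b)).comp (measurable_pi_apply i)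
      · simp only [hT_def, hi, if_false]
        exact measurable_pi_apply i
    have hpre : ∀ (F' : Finset ℕ) (g : ℕ → Bool),
        T ⁻¹' {r : ℕ → Bool | ∀ i ∈ F', r i = g i}
          = {r : ℕ → Bool | ∀ i ∈ F', r i = (if i ∈ F then xor (σ i) (g i) else g i)} := by
      intro F' g
      ext r
      simp only [Set.mem_preimage, Set.mem_setOf_eq, hT_def]
      apply forall₂_congr
      intro i hi
      by_cases hiF : i ∈ F
      · simp only [hiF, if_true]; exact xor_eq_iff' (σ i) (r i) (g i)
      · simp [hiF]
    have hmapinst : IsProbabilityMeasure (μ.map T) := Measure.isProbabilityMeasure_map hT.aemeasurable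
    have hmap : μ.map T = μ := by
      refine ext_of_generate_finite C hgen hpi ?_ ?_
      · rintro s ⟨F', g, rfl⟩
        rw [Measure.map_apply hT (hcylmeas F' g), hpre F' g, hμ, hμ]
      · simp [measure_univ]
    calc μ (T ⁻¹' E) = μ.map T E := (Measure.map_apply hT hE).symm
      _ = μ E := by rw [hmap]
  -- disjoint family indexed by F → Bool
  set ext' : (F → Bool) → (ℕ → Bool) := fun s i => if h : i ∈ F then s ⟨i, h⟩ else false with hext'
  set T : (F → Bool) → (ℕ → Bool) → (ℕ → Bool) :=
    fun s r i => if i ∈ F then xor (ext' s i) (r i) else r i with hT2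
  set A : (F → Bool) → Set (ℕ → Bool) := fun s => T s ⁻¹' E with hA
  have hAmeas : ∀ s, MeasurableSet (A s) := by
    intro s
    apply MeasurableSet.preimage hE
    apply measurable_pi_lambda
    intro i
    by_cases hi : i ∈ F
    · simp only [hT2, hi, if_true]
      exact (measurable_from_top (f := fun b => xor (ext' s i) b)).comp (measurable_pi_apply i)
    · simp only [hT2, hi, if_false]
      exact measurable_pi_apply i
  have hAμ : ∀ s, μ (A s) = μ E := fun s => main (ext' s)
  have hdisj : Pairwise (Function.onFun Disjoint A) := by
    intro s t hst
    rw [Function.onFun, Set.disjoint_left]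
    intro r hrs hrt
    have h1 : T s r ∈ E := hrs
    have h2 : T t r ∈ E := hrt
    have heq : T s r = T t r := by
      apply hinj _ h1 _ h2
      intro n hn
      simp [hT2, hn]
    obtain ⟨i, hi⟩ : ∃ i : F, s i ≠ t i := by
      by_contra h
      push_neg at h
      exact hst (funext h)
    have := congrFun heq i
    simp only [hT2, i.2, if_true, hext', dif_pos i.2] at this
    exact hi (xor_cancel' (s i) (t i) (r i.1) (by simpa using this))
  have hsum : ∑' s : (F → Bool), μ (A s) = μ (⋃ s, A s) := (measure_iUnion hdisj hAmeas).symm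
  have hle1 : (2 ^ k : ENNReal) * μ E ≤ 1 := by
    have h1 : μ (⋃ s, A s) ≤ 1 := prob_le_one
    rw [← hsum] at h1
    have h2 : ∑' s : (F → Bool), μ (A s) = (Fintype.card (F → Bool) : ENNReal) * μ E := by
      rw [tsum_fintype]
      simp [hAμ, Finset.sum_const, nsmul_eq_mul]
    rw [h2] at h1
    have hcard : (Fintype.card (F → Bool) : ℕ) = 2 ^ k := by
      simp [Fintype.card_fun, Fintype.card_coe, hF]
    rw [hcard] at h1
    simpa using h1
  have hfin : μ E ≤ ((2 : ENNReal) ^ k)⁻¹ := by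
    rw [ENNReal.le_inv_iff_mul_le, mul_comm]
    exact hle1
  calc μ E ≤ ((2 : ENNReal) ^ k)⁻¹ := hfin
    _ = (2 : ENNReal)⁻¹ ^ k := by rw [ENNReal.inv_pow]
end

section
/- Let (C_i)_{i ∈ ℕ} be a sequence of closed nowhere dense subsets of (ℕ → Bool) × (ℕ → Bool). Then there exists a nonempty perfect closed set P ⊆ (ℕ → Bool) such that for all x, y ∈ P with x ≠ y and all i, the pair (x, y) does not belong to C_i. -/
/-! Mycielski-style construction: auxiliary development. -/

namespace Myc

/-- The cylinder (basic clopen set) in Cantor space determined by a finite string. -/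
def cyl (u : List Bool) : Set (ℕ → Bool) := {x | ∀ k, k < u.length → x k = u.getD k false}

lemma cyl_nonempty (u : List Bool) : (cyl u).Nonempty :=
  ⟨fun k => u.getD k false, fun _ _ => rfl⟩

lemma cyl_mono {u v : List Bool} (h : u <+: v) : cyl v ⊆ cyl u := by
  obtain ⟨w, rfl⟩ := h
  intro x hx k hk
  have := hx k (by simp [List.length_append]; omega)
  rwa [List.getD_append _ _ _ _ hk] at this

lemma isOpen_cyl (u : List Bool) : IsOpen (cyl u) := by
  have : cyl u = ⋂ k ∈ Finset.range u.length, (fun x : ℕ → Bool => x k) ⁻¹' {u.getD k false} := by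
    ext x; simp [cyl, Set.mem_iInter]
  rw [this]
  exact isOpen_biInter_finset fun k _ => (continuous_apply k).isOpen_preimage _ (isOpen_discrete _)

lemma exists_agree_subset {U : Set (ℕ → Bool)} (hU : IsOpen U) {x : ℕ → Bool} (hx : x ∈ U) :
    ∃ N : ℕ, ∀ y : ℕ → Bool, (∀ k < N, y k = x k) → y ∈ U := by
  obtain ⟨I, u, hu, hsub⟩ := isOpen_pi_iff.mp hU x hx
  refine ⟨(I.sup id) + 1, fun y hy => hsub ?_⟩
  intro i hi
  have : y i = x i := hy i (Nat.lt_succ_of_le (Finset.le_sup (f := id) hi))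
  rw [this]; exact (hu i hi).2

lemma prefix_ofFn {u : List Bool} {x : ℕ → Bool} (hx : x ∈ cyl u) (N : ℕ) (hN : u.length ≤ N) :
    u <+: List.ofFn (fun i : Fin N => x i) := by
  rw [List.prefix_iff_eq_take]
  apply List.ext_getElem
  · simp [hN]
  · intro k h1 h2
    simp only [List.getElem_take, List.getElem_ofFn]
    have := hx k h1
    simp [List.getD_eq_getElem?_getD, List.getElem?_eq_getElem h1] at this
    exact this.symm

lemma mem_cyl_ofFn_agree {x y : ℕ → Bool} {N : ℕ}
    (hy : y ∈ cyl (List.ofFn (fun i : Fin N => x i))) : ∀ k < N, y k = x k := by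
  intro k hk
  have := hy k (by simpa using hk)
  simpa [List.getD_eq_getElem?_getD, List.getElem?_ofFn, hk] using this

/-- Two finite strings can be extended so that the product of their cylinders avoids a given
closed nowhere dense set. -/
lemma shrink {D : Set ((ℕ → Bool) × (ℕ → Bool))} (hD : IsClosed D) (hnwd : IsNowhereDense D)
    (u v : List Bool) :
    ∃ u' v' : List Bool, u <+: u' ∧ v <+: v' ∧
      ∀ x ∈ cyl u', ∀ y ∈ cyl v', (x, y) ∉ D := by
  have hdense : Dense Dᶜ := by
    rw [← interior_eq_empty_iff_dense_compl]
    have := hnwd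
    rwa [IsNowhereDense, hD.closure_eq] at this
  obtain ⟨⟨x, y⟩, hmem, hcomp⟩ :=
    hdense.inter_open_nonempty ((cyl u) ×ˢ (cyl v)) ((isOpen_cyl u).prod (isOpen_cyl v))
      ((cyl_nonempty u).prod (cyl_nonempty v))
  obtain ⟨A, B, hA, hB, hxA, hyB, hAB⟩ := isOpen_prod_iff.mp hD.isOpen_compl x y hcomp
  obtain ⟨N₁, hN₁⟩ := exists_agree_subset hA hxA
  obtain ⟨N₂, hN₂⟩ := exists_agree_subset hB hyB
  refine ⟨List.ofFn (fun i : Fin (max N₁ u.length) => x i),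
         List.ofFn (fun i : Fin (max N₂ v.length) => y i),
         prefix_ofFn hmem.1 _ (le_max_right _ _),
         prefix_ofFn hmem.2 _ (le_max_right _ _), ?_⟩
  intro a ha b hb hD'
  have haA : a ∈ A := hN₁ a fun k hk => mem_cyl_ofFn_agree ha k (lt_max_of_lt_left hk)
  have hbB : b ∈ B := hN₂ b fun k hk => mem_cyl_ofFn_agree hb k (lt_max_of_lt_left hk)
  exact hAB (Set.mk_mem_prod haA hbB) hD'

noncomputable def shrinkPair {D : Set ((ℕ → Bool) × (ℕ → Bool))} (hD : IsClosed D)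
    (hnwd : IsNowhereDense D) (u v : List Bool) : List Bool × List Bool :=
  ⟨(shrink hD hnwd u v).choose, (shrink hD hnwd u v).choose_spec.choose⟩

lemma shrinkPair_spec {D : Set ((ℕ → Bool) × (ℕ → Bool))} (hD : IsClosed D)
    (hnwd : IsNowhereDense D) (u v : List Bool) :
    u <+: (shrinkPair hD hnwd u v).1 ∧ v <+: (shrinkPair hD hnwd u v).2 ∧
      ∀ x ∈ cyl (shrinkPair hD hnwd u v).1, ∀ y ∈ cyl (shrinkPair hD hnwd u v).2, (x, y) ∉ D :=
  (shrink hD hnwd u v).choose_spec.choose_spec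

/-- The invariant maintained at each level of the tree construction. -/
structure Good (C : ℕ → Set ((ℕ → Bool) × (ℕ → Bool))) (n : ℕ)
    (σ : (Fin n → Bool) → List Bool) : Prop where
  len : ∀ s, n ≤ (σ s).length
  disj : ∀ s t, s ≠ t → ∀ z, z ∈ cyl (σ s) → z ∈ cyl (σ t) → False
  avoid : ∀ s t, s ≠ t → ∀ i, i < n → ∀ x ∈ cyl (σ s), ∀ y ∈ cyl (σ t), (x, y) ∉ C i

section Step
variable {C : ℕ → Set ((ℕ → Bool) × (ℕ → Bool))}

lemma step_exists (hCc : ∀ i, IsClosed (C i)) (hCn : ∀ i, IsNowhereDense (C i)) {n : ℕ}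
    {σ : (Fin n → Bool) → List Bool} (h : Good C n σ) :
    ∃ τ : (Fin (n+1) → Bool) → List Bool, Good C (n+1) τ ∧ ∀ s, σ (Fin.init s) <+: τ s := by
  classical
  set S := (Fin (n+1) → Bool)
  let τ₀ : S → List Bool := fun s => σ (Fin.init s) ++ [s (Fin.last n)]
  let refine : (S → List Bool) → (S × S × Fin (n+1)) → (S → List Bool) := fun τ e =>
    if e.1 = e.2.1 then τ else
      Function.update (Function.update τ e.1
          (shrinkPair (hCc e.2.2) (hCn e.2.2) (τ e.1) (τ e.2.1)).1) e.2.1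
        (shrinkPair (hCc e.2.2) (hCn e.2.2) (τ e.1) (τ e.2.1)).2
  have R1 : ∀ τ e r, τ r <+: refine τ e r := by
    intro τ e r
    by_cases he : e.1 = e.2.1
    · simp [refine, he]
    · simp only [refine, if_neg he]
      obtain ⟨h1, h2, -⟩ := shrinkPair_spec (hCc e.2.2) (hCn e.2.2) (τ e.1) (τ e.2.1)
      by_cases hr2 : r = e.2.1
      · subst hr2; simpa using h2
      · rw [Function.update_of_ne hr2]
        by_cases hr1 : r = e.1
        · subst hr1; simpa using h1
        · rw [Function.update_of_ne hr1]
  have R2 : ∀ τ (e : S × S × Fin (n+1)), e.1 ≠ e.2.1 →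
      ∀ x ∈ cyl (refine τ e e.1), ∀ y ∈ cyl (refine τ e e.2.1), (x, y) ∉ C e.2.2 := by
    intro τ e he x hx y hy
    obtain ⟨-, -, h3⟩ := shrinkPair_spec (hCc e.2.2) (hCn e.2.2) (τ e.1) (τ e.2.1)
    simp only [refine, if_neg he] at hx hy
    rw [Function.update_of_ne he, Function.update_self] at hx
    rw [Function.update_self] at hy
    exact h3 x hx y hy
  have F1 : ∀ (l : List (S × S × Fin (n+1))) (τ r), τ r <+: (l.foldl refine τ) r := by
    intro l
    induction l with
    | nil => intro τ r; exact List.prefix_refl _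
    | cons a l ih => intro τ r; exact (R1 τ a r).trans (ih (refine τ a) r)
  have F2 : ∀ (l : List (S × S × Fin (n+1))) (τ), ∀ e ∈ l, e.1 ≠ e.2.1 →
      ∀ x ∈ cyl ((l.foldl refine τ) e.1), ∀ y ∈ cyl ((l.foldl refine τ) e.2.1),
        (x, y) ∉ C e.2.2 := by
    intro l
    induction l with
    | nil => intro τ e he; simp at he
    | cons a l ih =>
      intro τ e he hne x hx y hy
      rw [List.foldl_cons] at hx hy
      rcases List.mem_cons.mp he with rfl | hel
      · exact R2 τ e hne x (cyl_mono (F1 l (refine τ e) e.1) hx)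
          y (cyl_mono (F1 l (refine τ e) e.2.1) hy)
      · exact ih (refine τ a) e hel hne x hx y hy
  set L := (Finset.univ : Finset (S × S × Fin (n+1))).toList with hL
  refine ⟨L.foldl refine τ₀, ⟨?_, ?_, ?_⟩, ?_⟩
  · intro s
    have h0 : n + 1 ≤ (τ₀ s).length := by
      simp only [τ₀, List.length_append, List.length_singleton]
      have := h.len (Fin.init s); omega
    exact h0.trans (F1 L τ₀ s).length_le
  · intro s t hst z hzs hzt
    have hzs0 := cyl_mono (F1 L τ₀ s) hzs
    have hzt0 := cyl_mono (F1 L τ₀ t) hzt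
    by_cases hinit : Fin.init s = Fin.init t
    · have hlast : s (Fin.last n) ≠ t (Fin.last n) := by
        intro hl
        apply hst
        funext j
        rcases Fin.eq_castSucc_or_eq_last j with ⟨j', rfl⟩ | rfl
        · exact congrFun hinit j'
        · exact hl
      set Ls := (σ (Fin.init s)).length with hLs
      have h1 : z Ls = s (Fin.last n) := by
        have := hzs0 Ls (by simp only [τ₀, List.length_append, List.length_singleton]; omega)
        rwa [List.getD_append_right _ _ _ _ (le_refl _), Nat.sub_self] at this
      have h2 : z Ls = t (Fin.last n) := by
        have hLt : Ls = (σ (Fin.init t)).length := by rw [hLs, hinit]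
        have := hzt0 Ls (by
          simp only [τ₀, List.length_append, List.length_singleton, ← hLt]; omega)
        rw [hLt] at this ⊢
        rwa [List.getD_append_right _ _ _ _ (le_refl _), Nat.sub_self] at this
      exact hlast (h1 ▸ h2 ▸ rfl)
    · exact h.disj _ _ hinit z (cyl_mono ⟨_, rfl⟩ hzs0) (cyl_mono ⟨_, rfl⟩ hzt0)
  · intro s t hst i hi x hx y hy
    have : ((s, t, (⟨i, hi⟩ : Fin (n+1))) : S × S × Fin (n+1)) ∈ L :=
      Finset.mem_toList.mpr (Finset.mem_univ _)
    exact F2 L τ₀ (s, t, ⟨i, hi⟩) this hst x hx y hy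
  · intro s
    exact List.IsPrefix.trans ⟨_, rfl⟩ (F1 L τ₀ s)

end Step

lemma prefix_getD {u v : List Bool} (h : u <+: v) {k : ℕ} (hk : k < u.length) :
    v.getD k false = u.getD k false := by
  obtain ⟨w, rfl⟩ := h; rw [List.getD_append _ _ _ _ hk]

section Main
variable (C : ℕ → Set ((ℕ → Bool) × (ℕ → Bool)))
  (hCc : ∀ i, IsClosed (C i)) (hCn : ∀ i, IsNowhereDense (C i))

noncomputable def seq : (n : ℕ) → {σ : (Fin n → Bool) → List Bool // Good C n σ}
  | 0 => ⟨fun _ => [], ⟨fun _ => Nat.zero_le _,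
      fun s t hst => absurd (Subsingleton.elim s t) hst,
      fun _ _ _ i hi => absurd hi (Nat.not_lt_zero i)⟩⟩
  | n+1 => ⟨(step_exists hCc hCn (seq n).2).choose,
      (step_exists hCc hCn (seq n).2).choose_spec.1⟩

lemma seq_ext (n : ℕ) (s : Fin (n+1) → Bool) :
    (seq C hCc hCn n).1 (Fin.init s) <+: (seq C hCc hCn (n+1)).1 s :=
  (step_exists hCc hCn (seq C hCc hCn n).2).choose_spec.2 s

def res (n : ℕ) (x : ℕ → Bool) : Fin n → Bool := fun j => x j

lemma res_init (n : ℕ) (x : ℕ → Bool) : Fin.init (res (n+1) x) = res n x := by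
  funext j; simp [Fin.init, res]

lemma seq_mono {m n : ℕ} (h : m ≤ n) (x : ℕ → Bool) :
    (seq C hCc hCn m).1 (res m x) <+: (seq C hCc hCn n).1 (res n x) := by
  induction n, h using Nat.le_induction with
  | base => exact List.prefix_refl _
  | succ n hmn ih =>
    refine ih.trans ?_
    have := seq_ext C hCc hCn n (res (n+1) x)
    rwa [res_init] at this

/-- The limit map from Cantor space into Cantor space. -/
noncomputable def f (x : ℕ → Bool) : ℕ → Bool :=
  fun k => ((seq C hCc hCn (k+1)).1 (res (k+1) x)).getD k false

lemma f_mem_cyl (n : ℕ) (x : ℕ → Bool) :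
    f C hCc hCn x ∈ cyl ((seq C hCc hCn n).1 (res n x)) := by
  intro k hk
  have hk1 : k < ((seq C hCc hCn (k+1)).1 (res (k+1) x)).length :=
    lt_of_lt_of_le (Nat.lt_succ_self k) ((seq C hCc hCn (k+1)).2.len _)
  have p1 := seq_mono C hCc hCn (le_max_left n (k+1)) x
  have p2 := seq_mono C hCc hCn (le_max_right n (k+1)) x
  show ((seq C hCc hCn (k+1)).1 (res (k+1) x)).getD k false = _
  rw [← prefix_getD p2 hk1, prefix_getD p1 hk]

lemma f_inj : Function.Injective (f C hCc hCn) := by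
  intro x y hxy
  by_contra hne
  obtain ⟨k, hk⟩ := Function.ne_iff.mp hne
  have hres : res (k+1) x ≠ res (k+1) y := by
    intro h; exact hk (congrFun h ⟨k, Nat.lt_succ_self k⟩)
  exact (seq C hCc hCn (k+1)).2.disj _ _ hres (f C hCc hCn x)
    (f_mem_cyl C hCc hCn (k+1) x) (hxy ▸ f_mem_cyl C hCc hCn (k+1) y)

lemma f_cont : Continuous (f C hCc hCn) := by
  apply continuous_pi
  intro k
  have : (fun x => f C hCc hCn x k) =
      (fun s : Fin (k+1) → Bool => ((seq C hCc hCn (k+1)).1 s).getD k false) ∘ (res (k+1)) :=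
    rfl
  rw [this]
  exact continuous_of_discreteTopology.comp (continuous_pi fun j => continuous_apply j.val)

end Main
end Myc

/-- Mycielski-style construction: given countably many closed nowhere dense
subsets of the square of Cantor space, there is a nonempty perfect set `P` in
Cantor space such that no pair of distinct elements of `P` lies in any of
them. -/
theorem perfect_set_avoiding_meager_pairs
    (C : ℕ → Set ((ℕ → Bool) × (ℕ → Bool)))
    (hC_closed : ∀ i : ℕ, IsClosed (C i))
    (hC_nwd : ∀ i : ℕ, IsNowhereDense (C i)) :
    ∃ P : Set (ℕ → Bool), P.Nonempty ∧ Perfect P ∧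
      ∀ x ∈ P, ∀ y ∈ P, x ≠ y → ∀ i : ℕ, (x, y) ∉ C i := by
  classical
  set f := Myc.f C hC_closed hC_nwd with hf
  refine ⟨Set.range f, ⟨f (fun _ => false), Set.mem_range_self _⟩, ⟨?_, ?_⟩, ?_⟩
  · exact (isCompact_range (Myc.f_cont C hC_closed hC_nwd)).isClosed
  · -- no isolated points
    rintro x ⟨a, rfl⟩
    rw [accPt_iff_nhds]
    intro U hU
    obtain ⟨V, hVU, hV, hxV⟩ := mem_nhds_iff.mp hU
    obtain ⟨N, hN⟩ := Myc.exists_agree_subset hV hxV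
    set b := Function.update a N (!(a N)) with hb
    have hab : b ≠ a := by
      intro h
      have := congrFun h N
      simp [hb] at this
    have hfb : ∀ k < N, f b k = f a k := by
      intro k hk
      have : Myc.res (k+1) b = Myc.res (k+1) a := by
        funext j
        have : (j : ℕ) ≠ N := by omega
        simp [Myc.res, hb, Function.update_of_ne this]
      show ((Myc.seq C hC_closed hC_nwd (k+1)).1 (Myc.res (k+1) b)).getD k false = _
      rw [this]; rfl
    refine ⟨f b, ⟨hVU (hN (f b) hfb), Set.mem_range_self _⟩, ?_⟩
    exact fun h => hab (Myc.f_inj C hC_closed hC_nwd h)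
  · rintro x ⟨a, rfl⟩ y ⟨b, rfl⟩ hxy i
    have hab : a ≠ b := fun h => hxy (h ▸ rfl)
    obtain ⟨k, hk⟩ := Function.ne_iff.mp hab
    set n := max (k+1) (i+1) with hn
    have hres : Myc.res n a ≠ Myc.res n b := by
      intro h
      exact hk (congrFun h ⟨k, lt_of_lt_of_le (Nat.lt_succ_self k) (le_max_left _ _)⟩)
    exact (Myc.seq C hC_closed hC_nwd n).2.avoid _ _ hres i
      (lt_of_lt_of_le (Nat.lt_succ_self i) (le_max_right _ _))
      (f a) (Myc.f_mem_cyl C hC_closed hC_nwd n a)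
      (f b) (Myc.f_mem_cyl C hC_closed hC_nwd n b)
end

section
/- Let U ⊆ (ℕ → Bool) × (ℕ → Bool) be an open set that is symmetric, i.e., (x, y) ∈ U if and only if (y, x) ∈ U. Then there exists a nonempty perfect closed set P ⊆ (ℕ → Bool) such that either (x, y) ∈ U for all x, y ∈ P with x ≠ y, or (x, y) ∉ U for all x, y ∈ P with x ≠ y. -/
open Set Function Filter Topology

/-! Auxiliary development for Galvin's open-coloring partition theorem. -/

namespace GalvinAux

/-- The cylinder (basic clopen set) determined by a finite binary string. -/
def Cyl (s : List Bool) : Set (ℕ → Bool) :=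
  {x | ∀ i : ℕ, (h : i < s.length) → x i = s[i]}

lemma Cyl_anti {s t : List Bool} (h : s <+: t) : Cyl t ⊆ Cyl s := by
  intro x hx i hi
  rw [hx i (lt_of_lt_of_le hi h.length_le), h.getElem hi]

lemma Cyl_disj (t : List Bool) : Cyl (t ++ [false]) ∩ Cyl (t ++ [true]) = ∅ := by
  ext x
  simp only [Set.mem_inter_iff, Set.mem_empty_iff_false, iff_false, not_and]
  intro h1 h2
  have l1 : t.length < (t ++ [false]).length := by simp
  have l2 : t.length < (t ++ [true]).length := by simp
  have e1 := h1 t.length l1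
  have e2 := h2 t.length l2
  rw [List.getElem_concat_length rfl] at e1 e2
  rw [e1] at e2
  exact Bool.false_ne_true e2

lemma mem_Cyl_ofFn (x : ℕ → Bool) (n : ℕ) :
    x ∈ Cyl (List.ofFn fun i : Fin n => x i) := by
  intro i hi
  simp only [List.length_ofFn] at hi
  simp [List.getElem_ofFn]

lemma prefix_ofFn {s : List Bool} {x : ℕ → Bool} (hx : x ∈ Cyl s) {n : ℕ}
    (hn : s.length ≤ n) : s <+: List.ofFn (fun i : Fin n => x i) := by
  have hs : s = (List.ofFn fun i : Fin n => x i).take s.length := by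
    apply List.ext_getElem
    · simp only [List.length_take, List.length_ofFn]
      omega
    · intro i h1 h2
      rw [List.getElem_take, List.getElem_ofFn]
      exact (hx i h1).symm
  rw [hs]
  exact List.take_prefix _ _

/-- The specification for the splitting step of the fusion construction:
`u, v` are strict extensions of `t` with disjoint cylinders whose product
rectangle (in both orders) lands in `W`. -/
def SplitSpec (W : Set ((ℕ → Bool) × (ℕ → Bool))) (t u v : List Bool) : Prop :=
  t <+: u ∧ t <+: v ∧ t.length < u.length ∧ t.length < v.length ∧
  Cyl u ∩ Cyl v = ∅ ∧ Cyl u ×ˢ Cyl v ⊆ W ∧ Cyl v ×ˢ Cyl u ⊆ W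

variable (W : Set ((ℕ → Bool) × (ℕ → Bool))) (base : List Bool)
variable (hsplit : ∀ t, base <+: t → ∃ u v, SplitSpec W t u v)

/-- The fusion tree: strings (read right-to-left) index nodes of a perfect
tree of binary strings. -/
noncomputable def Gfun : List Bool → List Bool
  | [] => base
  | b :: s =>
    if h : base <+: Gfun s then
      if b then (hsplit _ h).choose_spec.choose else (hsplit _ h).choose
    else Gfun s

lemma Gfun_base : ∀ s, base <+: Gfun W base hsplit s := by
  intro s
  induction s with
  | nil => simp [Gfun]
  | cons b s ih =>
    have spec := (hsplit _ ih).choose_spec.choose_spec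
    rw [Gfun, dif_pos ih]
    cases b
    · simpa using ih.trans spec.1
    · simpa using ih.trans spec.2.1

lemma Gfun_spec (s : List Bool) :
    SplitSpec W (Gfun W base hsplit s) (Gfun W base hsplit (false :: s))
      (Gfun W base hsplit (true :: s)) := by
  have hb := Gfun_base W base hsplit s
  have spec := (hsplit _ hb).choose_spec.choose_spec
  rw [Gfun, Gfun, dif_pos hb, dif_pos hb]
  simpa using spec

lemma Gfun_cons (b : Bool) (s : List Bool) :
    Gfun W base hsplit s <+: Gfun W base hsplit (b :: s) ∧
      (Gfun W base hsplit s).length < (Gfun W base hsplit (b :: s)).length := by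
  have spec := Gfun_spec W base hsplit s
  cases b
  · exact ⟨spec.1, spec.2.2.1⟩
  · exact ⟨spec.2.1, spec.2.2.2.1⟩

lemma Gfun_len (s : List Bool) : s.length ≤ (Gfun W base hsplit s).length := by
  induction s with
  | nil => simp
  | cons b s ih =>
    have := (Gfun_cons W base hsplit b s).2
    simp only [List.length_cons]
    omega

lemma Gfun_mono {s t : List Bool} (h : s <:+ t) :
    Gfun W base hsplit s <+: Gfun W base hsplit t := by
  induction t with
  | nil =>
    rw [List.suffix_nil.mp h]
  | cons b t ih =>
    rcases List.suffix_cons_iff.mp h with rfl | h'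
    · exact List.prefix_rfl
    · exact (ih h').trans (Gfun_cons W base hsplit b t).1

lemma Gfun_pair : ∀ s t : List Bool, s.length = t.length → s ≠ t →
    Cyl (Gfun W base hsplit s) ∩ Cyl (Gfun W base hsplit t) = ∅ ∧
      Cyl (Gfun W base hsplit s) ×ˢ Cyl (Gfun W base hsplit t) ⊆ W := by
  intro s
  induction s with
  | nil =>
    intro t hlen hne
    cases t with
    | nil => exact absurd rfl hne
    | cons c t => simp at hlen
  | cons b s ih =>
    intro t hlen hne
    cases t with
    | nil => simp at hlen
    | cons c t =>
      simp only [List.length_cons, Nat.add_right_cancel_iff] at hlen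
      by_cases hst : s = t
      · subst hst
        have hbc : b ≠ c := fun h => hne (by rw [h])
        have spec := Gfun_spec W base hsplit s
        cases b <;> cases c
        · exact absurd rfl hbc
        · exact ⟨spec.2.2.2.2.1, spec.2.2.2.2.2.1⟩
        · refine ⟨?_, spec.2.2.2.2.2.2⟩
          rw [Set.inter_comm]
          exact spec.2.2.2.2.1
        · exact absurd rfl hbc
      · obtain ⟨hdisj, hsub⟩ := ih t hlen hst
        have h1 : Cyl (Gfun W base hsplit (b :: s)) ⊆ Cyl (Gfun W base hsplit s) :=
          Cyl_anti (Gfun_cons W base hsplit b s).1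
        have h2 : Cyl (Gfun W base hsplit (c :: t)) ⊆ Cyl (Gfun W base hsplit t) :=
          Cyl_anti (Gfun_cons W base hsplit c t).1
        constructor
        · exact Set.eq_empty_of_subset_empty
            (le_trans (Set.inter_subset_inter h1 h2) hdisj.le)
        · exact (Set.prod_mono h1 h2).trans hsub

/-- The finite binary string `[a (n-1), ..., a 1, a 0]`. -/
def seqL (a : ℕ → Bool) : ℕ → List Bool
  | 0 => []
  | n + 1 => a n :: seqL a n

lemma seqL_length (a : ℕ → Bool) (n : ℕ) : (seqL a n).length = n := by
  induction n with
  | zero => rfl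
  | succ n ih => simp [seqL, ih]

lemma seqL_suffix (a : ℕ → Bool) {m n : ℕ} (h : m ≤ n) : seqL a m <:+ seqL a n := by
  induction n with
  | zero => rw [Nat.le_zero.mp h]
  | succ n ih =>
    rcases Nat.lt_or_ge m (n + 1) with h' | h'
    · exact (ih (Nat.lt_succ_iff.mp h')).trans (List.suffix_cons _ _)
    · rw [le_antisymm h h']

lemma seqL_ext {a b : ℕ → Bool} (n : ℕ) (h : ∀ k < n, a k = b k) :
    seqL a n = seqL b n := by
  induction n with
  | zero => rfl
  | succ n ih =>
    simp only [seqL]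
    rw [h n (Nat.lt_succ_self n), ih fun k hk => h k (Nat.lt_succ_of_lt hk)]

include hsplit in
/-- The main fusion lemma: from a splitting function we obtain a continuous
injective map of Cantor space all of whose off-diagonal pairs of values
land in `W`. -/
lemma galvin_main :
    ∃ f : (ℕ → Bool) → (ℕ → Bool), Continuous f ∧ Function.Injective f ∧
      ∀ a b : ℕ → Bool, a ≠ b → (f a, f b) ∈ W := by
  classical
  set G := Gfun W base hsplit with hG
  set f : (ℕ → Bool) → (ℕ → Bool) := fun a i => (G (seqL a (i + 1))).getD i false with hf
  have hcont : Continuous f := by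
    apply continuous_pi
    intro i
    have key : (fun a : ℕ → Bool => f a i) =
        (fun v : Fin (i + 1) → Bool =>
          (G (seqL (fun k => if h : k < i + 1 then v ⟨k, h⟩ else false) (i + 1))).getD i false)
        ∘ (fun a (k : Fin (i + 1)) => a k.val) := by
      funext a
      simp only [Function.comp, hf]
      congr 2
      exact (seqL_ext (i + 1) fun k hk => by simp [hk]).symm
    rw [key]
    exact Continuous.comp continuous_of_discreteTopology
      (continuous_pi fun k => continuous_apply _)
  have hlen : ∀ (a : ℕ → Bool) (n : ℕ), n ≤ (G (seqL a n)).length := fun a n => by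
    have := Gfun_len W base hsplit (seqL a n)
    rwa [seqL_length] at this
  have hmem : ∀ (a : ℕ → Bool) (n : ℕ), f a ∈ Cyl (G (seqL a n)) := by
    intro a n i hi
    show (G (seqL a (i + 1))).getD i false = _
    rcases le_total (i + 1) n with h | h
    · have hp := Gfun_mono W base hsplit (seqL_suffix a h)
      have hi' : i < (G (seqL a (i + 1))).length :=
        lt_of_lt_of_le (Nat.lt_succ_self i) (hlen a (i + 1))
      rw [List.getD_eq_getElem _ _ hi', hp.getElem hi']
    · have hp := Gfun_mono W base hsplit (seqL_suffix a h)
      have hi' : i < (G (seqL a (i + 1))).length := lt_of_lt_of_le hi hp.length_le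
      rw [List.getD_eq_getElem _ _ hi', ← hp.getElem hi]
  have hkey : ∀ a b : ℕ → Bool, a ≠ b → f a ≠ f b ∧ (f a, f b) ∈ W := by
    intro a b hab
    obtain ⟨n, hn⟩ : ∃ n, a n ≠ b n := by
      by_contra h; push_neg at h; exact hab (funext h)
    have hne : seqL a (n + 1) ≠ seqL b (n + 1) := by
      simp only [seqL]
      intro h
      exact hn (List.cons.injEq .. ▸ h).1
    have hlens : (seqL a (n + 1)).length = (seqL b (n + 1)).length := by
      rw [seqL_length, seqL_length]
    obtain ⟨hdisj, hsub⟩ := Gfun_pair W base hsplit _ _ hlens hne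
    refine ⟨?_, hsub (Set.mk_mem_prod (hmem a (n + 1)) (hmem b (n + 1)))⟩
    intro hfe
    have h2 := hmem b (n + 1)
    rw [← hfe] at h2
    have hmem2 : f a ∈ Cyl (G (seqL a (n + 1))) ∩ Cyl (G (seqL b (n + 1))) :=
      ⟨hmem a (n + 1), h2⟩
    rw [hdisj] at hmem2
    exact hmem2
  exact ⟨f, hcont, fun a b h => by_contra fun hab => (hkey a b hab).1 h,
    fun a b hab => (hkey a b hab).2⟩


lemma exists_cyl_rect {U : Set ((ℕ → Bool) × (ℕ → Bool))} (hU : IsOpen U)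
    {x y : ℕ → Bool} (hxy : (x, y) ∈ U) :
    ∃ n, Cyl (List.ofFn fun i : Fin n => x i) ×ˢ Cyl (List.ofFn fun i : Fin n => y i) ⊆ U := by
  by_contra h
  push_neg at h
  choose p hp1 hp2 using fun n => Set.not_subset.mp (h n)
  have hfst : ∀ n, ∀ i < n, (p n).1 i = x i := by
    intro n i hi
    have := (hp1 n).1 i (by simpa using hi)
    simpa using this
  have hsnd : ∀ n, ∀ i < n, (p n).2 i = y i := by
    intro n i hi
    have := (hp1 n).2 i (by simpa using hi)
    simpa using this
  have h1 : Tendsto (fun n => (p n).1) atTop (𝓝 x) := by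
    rw [tendsto_pi_nhds]
    intro i
    rw [nhds_discrete, Filter.tendsto_pure]
    filter_upwards [Filter.eventually_gt_atTop i] with n hn
    exact hfst n i hn
  have h2 : Tendsto (fun n => (p n).2) atTop (𝓝 y) := by
    rw [tendsto_pi_nhds]
    intro i
    rw [nhds_discrete, Filter.tendsto_pure]
    filter_upwards [Filter.eventually_gt_atTop i] with n hn
    exact hsnd n i hn
  have hten : Tendsto p atTop (𝓝 (x, y)) := by
    rw [nhds_prod_eq]
    exact h1.prodMk h2
  have hev : ∀ᶠ n in atTop, p n ∈ U := hten (hU.mem_nhds hxy)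
  obtain ⟨n, hn⟩ := hev.exists
  exact hp2 n hn

lemma perfect_range {f : (ℕ → Bool) → (ℕ → Bool)} (hcont : Continuous f)
    (hinj : Function.Injective f) : (Set.range f).Nonempty ∧ Perfect (Set.range f) := by
  refine ⟨Set.range_nonempty f, ⟨(isCompact_range hcont).isClosed, ?_⟩⟩
  rw [preperfect_iff_nhds]
  rintro x ⟨a, rfl⟩ V hV
  have hupd : Tendsto (fun n => Function.update a n (!(a n))) atTop (𝓝 a) := by
    rw [tendsto_pi_nhds]
    intro i
    rw [nhds_discrete, Filter.tendsto_pure]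
    filter_upwards [Filter.eventually_gt_atTop i] with n hn
    exact Function.update_of_ne (ne_of_lt hn) _ _
  have hten : Tendsto (fun n => f (Function.update a n (!(a n)))) atTop (𝓝 (f a)) :=
    (hcont.tendsto a).comp hupd
  have hev : ∀ᶠ n in atTop, f (Function.update a n (!(a n))) ∈ V := hten hV
  obtain ⟨n, hn⟩ := hev.exists
  refine ⟨f (Function.update a n (!(a n))), ⟨hn, Set.mem_range_self _⟩, ?_⟩
  intro h
  have h1 := hinj h
  have h2 : Function.update a n (!(a n)) n = a n := by rw [h1]
  simp at h2

end GalvinAux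

open GalvinAux in
/-- The open-coloring case of Galvin's partition theorem: a symmetric open
subset of the square of Cantor space admits a nonempty perfect homogeneous
set. -/
theorem galvin_open_coloring
    (U : Set ((ℕ → Bool) × (ℕ → Bool)))
    (hU_open : IsOpen U)
    (hU_symm : ∀ x y : ℕ → Bool, (x, y) ∈ U ↔ (y, x) ∈ U) :
    ∃ P : Set (ℕ → Bool), P.Nonempty ∧ Perfect P ∧
      ((∀ x ∈ P, ∀ y ∈ P, x ≠ y → (x, y) ∈ U) ∨
       (∀ x ∈ P, ∀ y ∈ P, x ≠ y → (x, y) ∉ U)) := by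
  classical
  by_cases hA : ∃ s : List Bool, ∀ t, s <+: t →
      ((Cyl (t ++ [false]) ×ˢ Cyl (t ++ [true])) ∩ U).Nonempty
  · -- U is somewhere dense: perfect clique
    obtain ⟨s, hs⟩ := hA
    have hsplit : ∀ t, s <+: t → ∃ u v, SplitSpec U t u v := by
      intro t ht
      obtain ⟨⟨x, y⟩, hmem, hxyU⟩ := hs t ht
      obtain ⟨hx, hy⟩ := hmem
      obtain ⟨n, hn⟩ := exists_cyl_rect hU_open hxyU
      set m := max n (t.length + 1) with hm
      set u := List.ofFn fun i : Fin m => x i with hu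
      set v := List.ofFn fun i : Fin m => y i with hv
      have hxlen : (t ++ [false]).length ≤ m := by
        simp only [List.length_append, List.length_cons, List.length_nil, hm]
        omega
      have hylen : (t ++ [true]).length ≤ m := by
        simp only [List.length_append, List.length_cons, List.length_nil, hm]
        omega
      have pu : t ++ [false] <+: u := prefix_ofFn hx hxlen
      have pv : t ++ [true] <+: v := prefix_ofFn hy hylen
      have pun : (List.ofFn fun i : Fin n => x i) <+: u :=
        prefix_ofFn (mem_Cyl_ofFn x n) (by simp [hm])
      have pvn : (List.ofFn fun i : Fin n => y i) <+: v :=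
        prefix_ofFn (mem_Cyl_ofFn y n) (by simp [hm])
      have hsub : Cyl u ×ˢ Cyl v ⊆ U :=
        (Set.prod_mono (Cyl_anti pun) (Cyl_anti pvn)).trans hn
      refine ⟨u, v, (t.prefix_append [false]).trans pu, (t.prefix_append [true]).trans pv,
        ?_, ?_, ?_, hsub, ?_⟩
      · simp only [hu, List.length_ofFn, hm]; omega
      · simp only [hv, List.length_ofFn, hm]; omega
      · apply Set.eq_empty_of_subset_empty
        calc Cyl u ∩ Cyl v ⊆ Cyl (t ++ [false]) ∩ Cyl (t ++ [true]) :=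
              Set.inter_subset_inter (Cyl_anti pu) (Cyl_anti pv)
          _ = ∅ := Cyl_disj t
      · rintro ⟨p, q⟩ ⟨hp, hq⟩
        exact (hU_symm q p).mp (hsub ⟨hq, hp⟩)
    obtain ⟨f, hcont, hinj, hW⟩ := galvin_main U s hsplit
    obtain ⟨hne, hperf⟩ := perfect_range hcont hinj
    refine ⟨Set.range f, hne, hperf, Or.inl ?_⟩
    rintro x ⟨a, rfl⟩ y ⟨b, rfl⟩ hxy
    exact hW a b (fun h => hxy (by rw [h]))
  · -- U is nowhere dense: perfect anticlique
    push_neg at hA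
    have hsplit : ∀ t₀, ([] : List Bool) <+: t₀ → ∃ u v, SplitSpec Uᶜ t₀ u v := by
      intro t₀ _
      obtain ⟨t, ht, hem⟩ := hA t₀
      have hsub : Cyl (t ++ [false]) ×ˢ Cyl (t ++ [true]) ⊆ Uᶜ := by
        intro p hp hpU
        have : p ∈ (∅ : Set ((ℕ → Bool) × (ℕ → Bool))) := hem ▸ Set.mem_inter hp hpU
        exact this
      have hlt := ht.length_le
      refine ⟨t ++ [false], t ++ [true], ht.trans (t.prefix_append [false]),
        ht.trans (t.prefix_append [true]), ?_, ?_, Cyl_disj t, hsub, ?_⟩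
      · simp only [List.length_append, List.length_cons, List.length_nil]; omega
      · simp only [List.length_append, List.length_cons, List.length_nil]; omega
      · rintro ⟨p, q⟩ ⟨hp, hq⟩ hpU
        exact hsub ⟨hq, hp⟩ ((hU_symm p q).mp hpU)
    obtain ⟨f, hcont, hinj, hW⟩ := galvin_main Uᶜ [] hsplit
    obtain ⟨hne, hperf⟩ := perfect_range hcont hinj
    refine ⟨Set.range f, hne, hperf, Or.inr ?_⟩
    rintro x ⟨a, rfl⟩ y ⟨b, rfl⟩ hxy
    exact hW a b (fun h => hxy (by rw [h]))
end

section
/- Let B ⊆ (ℕ → Bool) × (ℕ → Bool) be a Borel set that is symmetric, i.e., (x, y) ∈ B if and only if (y, x) ∈ B. Then there exists a nonempty perfect closed set P ⊆ (ℕ → Bool) such that either (x, y) ∈ B for all x, y ∈ P with x ≠ y, or (x, y) ∉ B for all x, y ∈ P with x ≠ y. -/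
open MeasureTheory PiNat Set Topology

abbrev Cnt := ℕ → Bool
abbrev Cond := Cnt × ℕ

def Cyl (p : Cond) : Set Cnt := PiNat.cylinder p.1 p.2
def CExt (p q : Cond) : Prop := p.2 ≤ q.2 ∧ q.1 ∈ Cyl p
def CBox (p q : Cond) : Set (Cnt × Cnt) := (Cyl p) ×ˢ (Cyl q)
def Bcol (B : Set (Cnt × Cnt)) (ε : Bool) : Set (Cnt × Cnt) := if ε then B else Bᶜ
def CGood (B : Set (Cnt × Cnt)) (p q : Cond) (ε : Bool) : Prop :=
  IsMeagre (CBox p q \ Bcol B ε)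

lemma mem_Cyl {p : Cond} {y : Cnt} : y ∈ Cyl p ↔ ∀ i < p.2, y i = p.1 i :=
  PiNat.mem_cylinder_iff

lemma CExt_refl (p : Cond) : CExt p p := ⟨le_rfl, PiNat.self_mem_cylinder _ _⟩

lemma Cyl_anti {p q : Cond} (h : CExt p q) : Cyl q ⊆ Cyl p := by
  intro y hy
  rw [mem_Cyl] at *
  intro i hi
  rw [hy i (lt_of_lt_of_le hi h.1)]
  exact h.2.out i hi

lemma CExt_trans {p q r : Cond} (h1 : CExt p q) (h2 : CExt q r) : CExt p r :=
  ⟨h1.1.trans h2.1, Cyl_anti h1 h2.2⟩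

lemma Cyl_nonempty (p : Cond) : (Cyl p).Nonempty := ⟨p.1, PiNat.self_mem_cylinder _ _⟩

lemma isOpen_Cyl (p : Cond) : IsOpen (Cyl p) := PiNat.isOpen_cylinder _ p.1 p.2

lemma isOpen_CBox (p q : Cond) : IsOpen (CBox p q) := (isOpen_Cyl p).prod (isOpen_Cyl q)

lemma CBox_nonempty (p q : Cond) : (CBox p q).Nonempty :=
  (Cyl_nonempty p).prod (Cyl_nonempty q)

lemma CBox_mono {p q p' q' : Cond} (h1 : CExt p p') (h2 : CExt q q') :
    CBox p' q' ⊆ CBox p q := Set.prod_mono (Cyl_anti h1) (Cyl_anti h2)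

def csplit (p : Cond) (b : Bool) : Cond := (Function.update p.1 p.2 b, p.2 + 1)

lemma CExt_csplit (p : Cond) (b : Bool) : CExt p (csplit p b) :=
  ⟨Nat.le_succ _, PiNat.update_mem_cylinder _ _ _⟩

lemma mem_Cyl_csplit {p : Cond} {b : Bool} {z : Cnt} (h : z ∈ Cyl (csplit p b)) :
    z p.2 = b := by
  rw [mem_Cyl] at h
  have := h p.2 (Nat.lt_succ_self _)
  simpa [csplit] using this

lemma csplit_disj {p : Cond} {z : Cnt} (h0 : z ∈ Cyl (csplit p false))
    (h1 : z ∈ Cyl (csplit p true)) : False := by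
  have := mem_Cyl_csplit h0
  have := mem_Cyl_csplit h1
  simp_all

lemma CGood_mono {B : Set (Cnt × Cnt)} {p q p' q' : Cond} {ε : Bool}
    (h1 : CExt p p') (h2 : CExt q q') (h : CGood B p q ε) : CGood B p' q' ε :=
  h.mono (Set.diff_subset_diff_left (CBox_mono h1 h2))

/-- shrink a box into an open set meeting it -/
lemma CBox_shrink {p q : Cond} {U : Set (Cnt × Cnt)} (hU : IsOpen U)
    (hne : (CBox p q ∩ U).Nonempty) :
    ∃ p' q', CExt p p' ∧ CExt q q' ∧ CBox p' q' ⊆ CBox p q ∩ U := by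
  obtain ⟨⟨a, b⟩, hmem, hUz⟩ := hne
  obtain ⟨U1, U2, hU1, hU2, ha, hb, hsub⟩ := isOpen_prod_iff.1 hU a b hUz
  obtain ⟨s1, ⟨x1, n1, rfl⟩, ha1, hs1⟩ :=
    (PiNat.isTopologicalBasis_cylinders (fun _ : ℕ => Bool)).exists_subset_of_mem_open ha hU1
  obtain ⟨s2, ⟨x2, n2, rfl⟩, hb2, hs2⟩ :=
    (PiNat.isTopologicalBasis_cylinders (fun _ : ℕ => Bool)).exists_subset_of_mem_open hb hU2
  refine ⟨(a, max p.2 n1), (b, max q.2 n2), ⟨le_max_left _ _, ?_⟩, ⟨le_max_left _ _, ?_⟩, ?_⟩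
  · exact hmem.1
  · exact hmem.2
  · rintro ⟨z1, z2⟩ ⟨hz1, hz2⟩
    simp only [Cyl] at hz1 hz2
    have hz1a : z1 ∈ cylinder a n1 := (PiNat.cylinder_anti _ (le_max_right _ _)) hz1
    have hz1p : z1 ∈ cylinder a p.2 := (PiNat.cylinder_anti _ (le_max_left _ _)) hz1
    have hz2b : z2 ∈ cylinder b n2 := (PiNat.cylinder_anti _ (le_max_right _ _)) hz2
    have hz2q : z2 ∈ cylinder b q.2 := (PiNat.cylinder_anti _ (le_max_left _ _)) hz2
    have e1 : cylinder a n1 = cylinder x1 n1 := PiNat.mem_cylinder_iff_eq.1 ha1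
    have e2 : cylinder b n2 = cylinder x2 n2 := PiNat.mem_cylinder_iff_eq.1 hb2
    have e1p : cylinder a p.2 = cylinder p.1 p.2 := PiNat.mem_cylinder_iff_eq.1 hmem.1
    have e2q : cylinder b q.2 = cylinder q.1 q.2 := PiNat.mem_cylinder_iff_eq.1 hmem.2
    refine ⟨⟨?_, ?_⟩, hsub ⟨hs1 ?_, hs2 ?_⟩⟩
    · show z1 ∈ cylinder p.1 p.2; exact e1p ▸ hz1p
    · show z2 ∈ cylinder q.1 q.2; exact e2q ▸ hz2q
    · exact e1 ▸ hz1a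
    · exact e2 ▸ hz2b

/-- the Baire-category dichotomy -/
lemma dichotomy {B : Set (Cnt × Cnt)} (hB : BaireMeasurableSet B) (p q : Cond) :
    ∃ p' q' ε, CExt p p' ∧ CExt q q' ∧ CGood B p' q' ε := by
  obtain ⟨W, hWopen, hBW⟩ := hB.residualEq_isOpen
  have hD : IsMeagre {z | ¬ (z ∈ B ↔ z ∈ W)} := by
    rw [IsMeagre]
    refine Filter.mem_of_superset hBW ?_
    intro z hz
    simp only [Set.mem_compl_iff, Set.mem_setOf_eq, not_not]
    exact iff_of_eq hz
  by_cases hne : (CBox p q ∩ W).Nonempty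
  · obtain ⟨p', q', h1, h2, hsub⟩ := CBox_shrink hWopen hne
    refine ⟨p', q', true, h1, h2, hD.mono ?_⟩
    intro z hz
    simp only [Bcol, if_true] at hz
    have := hsub hz.1
    exact fun h => hz.2 (h.2 this.2)
  · refine ⟨p, q, false, CExt_refl p, CExt_refl q, hD.mono ?_⟩
    intro z hz
    simp only [Bcol, if_neg Bool.false_ne_true, Set.mem_diff, Set.mem_compl_iff, not_not] at hz
    intro h
    exact hne ⟨z, hz.1, h.1 hz.2⟩

/-- decompose a meager set into countably many closed sets with dense complement -/
lemma meagre_decomp {M : Set (Cnt × Cnt)} (hM : IsMeagre M) :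
    ∃ Fam : ℕ → Set (Cnt × Cnt),
      (∀ i, IsClosed (Fam i) ∧ Dense (Fam i)ᶜ) ∧ M ⊆ ⋃ i, Fam i := by
  rw [IsMeagre, mem_residual_iff] at hM
  obtain ⟨S, hopen, hdense, hcnt, hsub⟩ := hM
  rcases S.eq_empty_or_nonempty with rfl | hSne
  · refine ⟨fun _ => ∅, fun i => ⟨isClosed_empty, by simp [dense_univ]⟩, ?_⟩
    intro x hx
    exact absurd hx (hsub (by simp : x ∈ ⋂₀ (∅ : Set (Set (Cnt × Cnt)))))
  · obtain ⟨g, rfl⟩ := hcnt.exists_eq_range hSne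
    refine ⟨fun i => (g i)ᶜ, fun i => ⟨(hopen _ ⟨i, rfl⟩).isClosed_compl, by
      simpa using hdense _ ⟨i, rfl⟩⟩, ?_⟩
    intro x hx
    by_contra hc
    simp only [Set.mem_iUnion, Set.mem_compl_iff, not_exists, not_not] at hc
    exact (hsub (fun t ht => by obtain ⟨i, rfl⟩ := ht; exact hc i)) hx

/-- avoid a closed set with dense complement -/
lemma avoid {F : Set (Cnt × Cnt)} (hF : IsClosed F) (hd : Dense Fᶜ) (p q : Cond) :
    ∃ p' q', CExt p p' ∧ CExt q q' ∧ CBox p' q' ∩ F = ∅ := by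
  have hne : (CBox p q ∩ Fᶜ).Nonempty := by
    obtain ⟨z, hz1, hz2⟩ := hd.inter_open_nonempty _ (isOpen_CBox p q) (CBox_nonempty p q)
    exact ⟨z, hz1, hz2⟩
  obtain ⟨p', q', h1, h2, hsub⟩ := CBox_shrink hF.isOpen_compl hne
  refine ⟨p', q', h1, h2, ?_⟩
  ext z
  simp only [Set.mem_inter_iff, Set.mem_empty_iff_false, iff_false, not_and]
  exact fun hz => (hsub hz).2

/-! ### combinatorics of finite binary strings -/

def allLists : ℕ → List (List Bool)
  | 0 => [[]]
  | n + 1 => (allLists n).flatMap fun w => [w ++ [false], w ++ [true]]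

lemma mem_allLists : ∀ (n : ℕ) (u : List Bool), u.length = n → u ∈ allLists n := by
  intro n
  induction n with
  | zero => intro u hu; simp [allLists, List.length_eq_zero_iff.1 hu]
  | succ n ih =>
    intro u hu
    have hne : u ≠ [] := by rintro rfl; simp at hu
    have hdec : u.dropLast ++ [u.getLast hne] = u := List.dropLast_append_getLast hne
    have hlen : u.dropLast.length = n := by
      have h2 := congrArg List.length hdec
      rw [List.length_append] at h2
      simp only [List.length_singleton] at h2
      omega
    simp only [allLists, List.mem_flatMap]
    refine ⟨u.dropLast, ih _ hlen, ?_⟩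
    rcases Bool.dichotomy (u.getLast hne) with h | h <;> rw [← hdec, h] <;> simp

/-- generic sequential extension over a list of tasks -/
lemma iterate_tasks {α : Type*} {T : Type*} (ext : α → α → Prop)
    (hrefl : ∀ a, ext a a) (htrans : ∀ {a b c}, ext a b → ext b c → ext a c)
    (P : T → α → Prop) (hmono : ∀ {t a a'}, P t a → ext a a' → P t a')
    (L : List T) (hsolve : ∀ t ∈ L, ∀ a, ∃ a', ext a a' ∧ P t a') (a₀ : α) :
    ∃ a, ext a₀ a ∧ ∀ t ∈ L, P t a := by
  induction L generalizing a₀ with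
  | nil => exact ⟨a₀, hrefl a₀, by simp⟩
  | cons t L ih =>
    obtain ⟨a₁, h01, hP⟩ := hsolve t (by simp) a₀
    obtain ⟨a, h1a, hall⟩ := ih (fun t' ht' a => hsolve t' (by simp [ht']) a) a₁
    refine ⟨a, htrans h01 h1a, ?_⟩
    intro t' ht'
    rcases List.mem_cons.1 ht' with rfl | ht'
    · exact hmono hP h1a
    · exact hall t' ht'

/-! ### the fusion construction -/

structure GSt where
  g : List Bool → Cond
  F : List Bool → ℕ → Set (Cnt × Cnt)
  eps : List Bool → Bool

def InvSt (s : GSt) : Prop := ∀ w i, IsClosed (s.F w i) ∧ Dense (s.F w i)ᶜ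

structure StepRel (B : Set (Cnt × Cnt)) (n : ℕ) (s s' : GSt) : Prop where
  gstab : ∀ u : List Bool, u.length ≤ n → s'.g u = s.g u
  gext : ∀ w : List Bool, w.length = n → ∀ b, CExt (csplit (s.g w) b) (s'.g (w ++ [b]))
  Fstab : ∀ w, w.length ≠ n → s'.F w = s.F w
  epsstab : ∀ w, w.length ≠ n → s'.eps w = s.eps w
  decomp : ∀ w, w.length = n →
    CBox (s'.g (w ++ [false])) (s'.g (w ++ [true])) \ Bcol B (s'.eps w) ⊆ ⋃ i, s'.F w i
  Fnice : InvSt s'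
  avoidP : ∀ u v : List Bool, u.length = n + 1 → v.length = n + 1 → u ≠ v →
    ∀ w : List Bool, w.length ≤ n → ∀ i ≤ n, CBox (s'.g u) (s'.g v) ∩ s'.F w i = ∅

section Step

variable {B : Set (Cnt × Cnt)} (hB : BaireMeasurableSet B)

/-- the extension preorder on partial assignments used during one step -/
def extn (n : ℕ) (a a' : List Bool → Cond) : Prop :=
  (∀ u, CExt (a u) (a' u)) ∧ ∀ u : List Bool, u.length ≠ n + 1 → a' u = a u

lemma extn_refl (n : ℕ) (a : List Bool → Cond) : extn n a a :=
  ⟨fun u => CExt_refl _, fun _ _ => rfl⟩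

lemma extn_trans {n : ℕ} {a b c : List Bool → Cond} (h1 : extn n a b) (h2 : extn n b c) :
    extn n a c :=
  ⟨fun u => CExt_trans (h1.1 u) (h2.1 u), fun u hu => (h2.2 u hu).trans (h1.2 u hu)⟩

lemma length_append_single (w : List Bool) (b : Bool) : (w ++ [b]).length = w.length + 1 := by
  simp

lemma length_of_mem_allLists : ∀ (n : ℕ) (u : List Bool), u ∈ allLists n → u.length = n := by
  intro n
  induction n with
  | zero => intro u hu; simp only [allLists, List.mem_singleton] at hu; simp [hu]
  | succ n ih =>
    intro u hu
    simp only [allLists, List.mem_flatMap] at hu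
    obtain ⟨w, hw, hu⟩ := hu
    have := ih w hw
    simp only [List.mem_cons, List.not_mem_nil, or_false] at hu
    rcases hu with h | h <;> simp [h, this]

lemma step_ex {B : Set (Cnt × Cnt)} (hB : BaireMeasurableSet B) (n : ℕ) (s : GSt)
    (hF : InvSt s) : ∃ s', StepRel B n s s' ∧ InvSt s' := by
  classical
  -- phase 0 : split all nodes of length n
  set g1 : List Bool → Cond := fun u =>
    if u.length = n + 1 then csplit (s.g u.dropLast) (u.getLastD false) else s.g u with hg1
  -- phase A : make all sibling pairs good
  set PA : List Bool → (List Bool → Cond) → Prop := fun w a =>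
    ∃ ε, CGood B (a (w ++ [false])) (a (w ++ [true])) ε with hPA
  have hsolveA : ∀ w ∈ allLists n, ∀ a : List Bool → Cond, ∃ a', extn n a a' ∧ PA w a' := by
    intro w hw a
    have hwlen : w.length = n := length_of_mem_allLists n w hw
    obtain ⟨p', q', ε, h1, h2, hgood⟩ := dichotomy hB (a (w ++ [false])) (a (w ++ [true]))
    have hne : w ++ [false] ≠ w ++ [true] := by simp
    refine ⟨fun u => if u = w ++ [false] then p' else if u = w ++ [true] then q' else a u,
      ⟨?_, ?_⟩, ?_⟩
    · intro u
      by_cases h : u = w ++ [false]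
      · simp only [h, if_pos rfl]; exact h1
      · by_cases h' : u = w ++ [true]
        · simp only [h', if_neg (h' ▸ h), if_pos rfl]; exact h2
        · simp only [if_neg h, if_neg h']; exact CExt_refl _
    · intro u hu
      have h1' : u ≠ w ++ [false] := fun h => hu (h ▸ by simp [hwlen])
      have h2' : u ≠ w ++ [true] := fun h => hu (h ▸ by simp [hwlen])
      simp [h1', h2']
    · refine ⟨ε, ?_⟩
      simp only [hPA, if_pos rfl, if_neg hne, if_neg (Ne.symm hne)]
      exact hgood
  have hmonoA : ∀ {t : List Bool} {a a'}, PA t a → extn n a a' → PA t a' := by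
    rintro t a a' ⟨ε, h⟩ hext
    exact ⟨ε, CGood_mono (hext.1 _) (hext.1 _) h⟩
  obtain ⟨g2, hext2, hA⟩ := iterate_tasks (extn n) (extn_refl n) extn_trans PA
    (fun h he => hmonoA h he) (allLists n) hsolveA g1
  have hgood2 : ∀ w : List Bool, w.length = n →
      ∃ ε, CGood B (g2 (w ++ [false])) (g2 (w ++ [true])) ε :=
    fun w hw => hA w (mem_allLists n w hw)
  -- phase B : choose colors and meager decompositions
  set eps2 : List Bool → Bool := fun w =>
    if h : w.length = n then (hgood2 w h).choose else s.eps w with heps2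
  have good2 : ∀ w (h : w.length = n),
      CGood B (g2 (w ++ [false])) (g2 (w ++ [true])) (eps2 w) := by
    intro w h
    simp only [heps2, dif_pos h]
    exact (hgood2 w h).choose_spec
  set F2 : List Bool → ℕ → Set (Cnt × Cnt) := fun w =>
    if h : w.length = n then (meagre_decomp (good2 w h)).choose else s.F w with hF2
  have hF2nice : ∀ w i, IsClosed (F2 w i) ∧ Dense (F2 w i)ᶜ := by
    intro w i
    simp only [hF2]
    by_cases h : w.length = n
    · rw [dif_pos h]; exact (meagre_decomp (good2 w h)).choose_spec.1 i
    · rw [dif_neg h]; exact hF w i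
  have hF2dec : ∀ w (h : w.length = n),
      CBox (g2 (w ++ [false])) (g2 (w ++ [true])) \ Bcol B (eps2 w) ⊆ ⋃ i, F2 w i := by
    intro w h
    simp only [hF2, dif_pos h]
    exact (meagre_decomp (good2 w h)).choose_spec.2
  -- phase C : avoid the nowhere dense pieces
  set PC : (List Bool × List Bool × List Bool × ℕ) → (List Bool → Cond) → Prop := fun t a =>
    t.1.length = n + 1 → t.2.1.length = n + 1 → t.1 ≠ t.2.1 →
      CBox (a t.1) (a t.2.1) ∩ F2 t.2.2.1 t.2.2.2 = ∅ with hPC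
  set LC : List (List Bool × List Bool × List Bool × ℕ) :=
    (allLists (n+1)).flatMap fun u => (allLists (n+1)).flatMap fun v =>
      ((List.range (n+1)).flatMap fun k => allLists k).flatMap fun w =>
        (List.range (n+1)).map fun i => (u, v, w, i) with hLC
  have mem_LC : ∀ u v w : List Bool, ∀ i : ℕ, u.length = n + 1 → v.length = n + 1 →
      w.length ≤ n → i ≤ n → (u, v, w, i) ∈ LC := by
    intro u v w i hu hv hw hi
    simp only [hLC, List.mem_flatMap, List.mem_map, List.mem_range]
    exact ⟨u, mem_allLists _ _ hu, v, mem_allLists _ _ hv,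
      w, ⟨w.length, by omega, mem_allLists _ _ rfl⟩, i, by omega, rfl⟩
  have hsolveC : ∀ t ∈ LC, ∀ a : List Bool → Cond, ∃ a', extn n a a' ∧ PC t a' := by
    rintro ⟨u, v, w, i⟩ _ a
    by_cases hu : u.length = n + 1
    · by_cases hv : v.length = n + 1
      · by_cases huv : u = v
        · exact ⟨a, extn_refl n a, fun _ _ h => absurd huv h⟩
        · obtain ⟨p', q', h1, h2, hbox⟩ := avoid (hF2nice w i).1 (hF2nice w i).2 (a u) (a v)
          refine ⟨fun z => if z = u then p' else if z = v then q' else a z, ⟨?_, ?_⟩, ?_⟩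
          · intro z
            by_cases h : z = u
            · simp only [h, if_pos rfl]; exact h1
            · by_cases h' : z = v
              · simp only [h', if_neg (h' ▸ h), if_pos rfl]; exact h2
              · simp only [if_neg h, if_neg h']; exact CExt_refl _
          · intro z hz
            have h1' : z ≠ u := fun h => hz (h ▸ hu)
            have h2' : z ≠ v := fun h => hz (h ▸ hv)
            simp [h1', h2']
          · intro _ _ _
            simp only [hPC, if_pos rfl, if_neg (Ne.symm huv), if_pos rfl]
            exact hbox
      · exact ⟨a, extn_refl n a, fun _ h => absurd h hv⟩
    · exact ⟨a, extn_refl n a, fun h => absurd h hu⟩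
  have hmonoC : ∀ {t} {a a'}, PC t a → extn n a a' → PC t a' := by
    rintro ⟨u, v, w, i⟩ a a' h hext hu hv huv
    have := h hu hv huv
    apply Set.eq_empty_of_subset_empty
    rw [← this]
    exact Set.inter_subset_inter_left _ (CBox_mono (hext.1 u) (hext.1 v))
  obtain ⟨g3, hext3, hC⟩ := iterate_tasks (extn n) (extn_refl n) extn_trans PC
    (fun h he => hmonoC h he) LC hsolveC g2
  -- assemble
  refine ⟨⟨g3, F2, eps2⟩, ⟨?_, ?_, ?_, ?_, ?_, hF2nice, ?_⟩, hF2nice⟩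
  · -- gstab
    intro u hu
    have h1 : u.length ≠ n + 1 := by omega
    show g3 u = s.g u
    rw [hext3.2 u h1, hext2.2 u h1]
    simp only [hg1, if_neg h1]
  · -- gext
    intro w hw b
    have hlen : (w ++ [b]).length = n + 1 := by simp [hw]
    have hg1v : g1 (w ++ [b]) = csplit (s.g w) b := by
      simp only [hg1, if_pos hlen]
      congr 1
      · rw [List.dropLast_concat]
      · rw [List.getLastD_concat]
    have := CExt_trans (hext2.1 (w ++ [b])) (hext3.1 (w ++ [b]))
    rw [hg1v] at this
    exact this
  · -- Fstab
    intro w hw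
    show F2 w = s.F w
    simp only [hF2, dif_neg hw]
  · -- epsstab
    intro w hw
    show eps2 w = s.eps w
    simp only [heps2, dif_neg hw]
  · -- decomp
    intro w hw
    show CBox (g3 (w ++ [false])) (g3 (w ++ [true])) \ Bcol B (eps2 w) ⊆ ⋃ i, F2 w i
    refine subset_trans ?_ (hF2dec w hw)
    exact Set.diff_subset_diff_left (CBox_mono (hext3.1 _) (hext3.1 _))
  · -- avoidP
    intro u v hu hv huv w hw i hi
    show CBox (g3 u) (g3 v) ∩ F2 w i = ∅
    exact hC (u, v, w, i) (mem_LC u v w i hu hv hw hi) hu hv huv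

section Chain

variable {B : Set (Cnt × Cnt)} (hB : BaireMeasurableSet B)

noncomputable def chain : ℕ → {s : GSt // InvSt s}
  | 0 => ⟨⟨fun _ => (fun _ => false, 0), fun _ _ => ∅, fun _ => false⟩,
      fun _ _ => ⟨isClosed_empty, by simp [dense_univ]⟩⟩
  | n + 1 => ⟨(step_ex hB n (chain n).1 (chain n).2).choose,
      (step_ex hB n (chain n).1 (chain n).2).choose_spec.2⟩

lemma chain_step (n : ℕ) : StepRel B n (chain hB n).1 (chain hB (n + 1)).1 :=
  (step_ex hB n (chain hB n).1 (chain hB n).2).choose_spec.1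

noncomputable def sig (u : List Bool) : Cond := (chain hB u.length).1.g u
noncomputable def Feps (w : List Bool) : Bool := (chain hB (w.length + 1)).1.eps w
noncomputable def FF (w : List Bool) (i : ℕ) : Set (Cnt × Cnt) :=
  (chain hB (w.length + 1)).1.F w i

lemma g_stab (u : List Bool) : ∀ m, u.length ≤ m → (chain hB m).1.g u = sig hB u := by
  intro m
  induction m with
  | zero => intro h; have : u.length = 0 := by omega
            rw [sig, this]
  | succ m ih =>
    intro h
    rcases Nat.lt_or_ge u.length (m + 1) with h' | h'
    · rw [(chain_step hB m).gstab u (by omega), ih (by omega)]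
    · have : u.length = m + 1 := by omega
      rw [sig, this]

lemma F_stab (w : List Bool) : ∀ m, w.length + 1 ≤ m → (chain hB m).1.F w = FF hB w := by
  intro m
  induction m with
  | zero => omega
  | succ m ih =>
    intro h
    rcases Nat.lt_or_ge (w.length + 1) (m + 1) with h' | h'
    · rw [(chain_step hB m).Fstab w (by omega), ih (by omega)]
    · have h2 : w.length + 1 = m + 1 := by omega
      show _ = (chain hB (w.length + 1)).1.F w
      rw [h2]

lemma M_ext1 (u : List Bool) (b : Bool) : CExt (csplit (sig hB u) b) (sig hB (u ++ [b])) := by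
  have h := (chain_step hB u.length).gext u rfl b
  rwa [show (chain hB u.length).1.g u = sig hB u from rfl,
    show (chain hB (u.length + 1)).1.g (u ++ [b]) = sig hB (u ++ [b]) by
      rw [sig, length_append_single]] at h

lemma M_ext1' (u : List Bool) (b : Bool) : CExt (sig hB u) (sig hB (u ++ [b])) :=
  CExt_trans (CExt_csplit _ b) (M_ext1 hB u b)

lemma M_ext (u r : List Bool) : CExt (sig hB u) (sig hB (u ++ r)) := by
  induction r using List.reverseRecOn with
  | nil => simpa using CExt_refl (sig hB u)
  | append_singleton r b ih =>
    rw [← List.append_assoc]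
    exact CExt_trans ih (M_ext1' hB (u ++ r) b)

lemma M_len (u : List Bool) : u.length ≤ (sig hB u).2 := by
  induction u using List.reverseRecOn with
  | nil => simp
  | append_singleton u b ih =>
    have h := (M_ext1 hB u b).1
    simp only [csplit] at h
    simp only [length_append_single]
    omega

lemma M_disj {u : List Bool} {z : Cnt} (h0 : z ∈ Cyl (sig hB (u ++ [false])))
    (h1 : z ∈ Cyl (sig hB (u ++ [true]))) : False :=
  csplit_disj (Cyl_anti (M_ext1 hB u false) h0) (Cyl_anti (M_ext1 hB u true) h1)

lemma M_decomp (u : List Bool) :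
    CBox (sig hB (u ++ [false])) (sig hB (u ++ [true])) \ Bcol B (Feps hB u) ⊆
      ⋃ i, FF hB u i := by
  have h := (chain_step hB u.length).decomp u rfl
  rwa [show (chain hB (u.length + 1)).1.g (u ++ [false]) = sig hB (u ++ [false]) by
      rw [sig, length_append_single],
    show (chain hB (u.length + 1)).1.g (u ++ [true]) = sig hB (u ++ [true]) by
      rw [sig, length_append_single],
    show (chain hB (u.length + 1)).1.eps u = Feps hB u from rfl,
    show (fun i => (chain hB (u.length + 1)).1.F u i) = fun i => FF hB u i from rfl] at h

lemma M_avoid {n : ℕ} {u v w : List Bool} {i : ℕ} (hu : u.length = n + 1)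
    (hv : v.length = n + 1) (huv : u ≠ v) (hw : w.length ≤ n) (hi : i ≤ n) :
    CBox (sig hB u) (sig hB v) ∩ FF hB w i = ∅ := by
  have h := (chain_step hB n).avoidP u v hu hv huv w hw i hi
  rwa [g_stab hB u (n + 1) (by omega), g_stab hB v (n + 1) (by omega),
    show (chain hB (n + 1)).1.F w i = FF hB w i by rw [F_stab hB w (n + 1) (by omega)]] at h

end Chain

/-! ### pruning to a constant color -/

lemma prune (E : List Bool → Bool) :
    ∃ (ε₀ : Bool) (e : List Bool → List Bool), (∀ u, E (e u) = ε₀) ∧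
      ∀ u b, ∃ r, e (u ++ [b]) = (e u ++ [b]) ++ r := by
  classical
  by_cases h : ∀ v : List Bool, ∃ u, E (v ++ u) = true
  · set pick : List Bool → List Bool := fun v => v ++ (h v).choose with hpick
    have hpickE : ∀ v, E (pick v) = true := fun v => (h v).choose_spec
    set e' : List Bool → List Bool := fun l => List.rec (pick []) (fun b _ r => pick (r ++ [b])) l
      with he'
    have he'nil : e' [] = pick [] := rfl
    have he'cons : ∀ b t, e' (b :: t) = pick (e' t ++ [b]) := fun _ _ => rfl
    have he'E : ∀ l, E (e' l) = true := by
      intro l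
      induction l with
      | nil => exact hpickE []
      | cons b t _ => rw [he'cons]; exact hpickE _
    refine ⟨true, fun u => e' u.reverse, fun u => he'E _, ?_⟩
    intro u b
    have hrev : (u ++ [b]).reverse = b :: u.reverse := by simp
    show ∃ r, e' (u ++ [b]).reverse = (e' u.reverse ++ [b]) ++ r
    rw [hrev, he'cons]
    exact ⟨(h (e' u.reverse ++ [b])).choose, rfl⟩
  · push_neg at h
    obtain ⟨v, hv⟩ := h
    refine ⟨false, fun u => v ++ u, fun u => ?_, fun u b => ⟨[], by simp⟩⟩
    have := hv u
    simp only [Bool.not_eq_true] at this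
    exact this

/-! ### binary approximations of a point -/

def bu (x : Cnt) : ℕ → List Bool
  | 0 => []
  | n + 1 => bu x n ++ [x n]

lemma bu_length (x : Cnt) (n : ℕ) : (bu x n).length = n := by
  induction n with
  | zero => rfl
  | succ n ih => simp [bu, ih]

lemma bu_prefix (x : Cnt) (m k : ℕ) : ∃ r, bu x (m + k) = bu x m ++ r := by
  induction k with
  | zero => exact ⟨[], by simp⟩
  | succ k ih =>
    obtain ⟨r, hr⟩ := ih
    exact ⟨r ++ [x (m + k)], by rw [show m + (k+1) = (m+k) + 1 from rfl, bu, hr]; simp⟩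

lemma bu_prefix' (x : Cnt) {m n : ℕ} (h : m ≤ n) : ∃ r, bu x n = bu x m ++ r := by
  obtain ⟨k, rfl⟩ := Nat.exists_eq_add_of_le h
  exact bu_prefix x m k

lemma bu_eq_of_agree {x y : Cnt} {n : ℕ} (h : ∀ i < n, x i = y i) : bu x n = bu y n := by
  induction n with
  | zero => rfl
  | succ n ih =>
    rw [bu, bu, ih (fun i hi => h i (by omega)), h n (by omega)]

lemma bu_ofFn (x : Cnt) (n : ℕ) : bu x n = List.ofFn (fun i : Fin n => x i) := by
  induction n with
  | zero => rfl
  | succ n ih =>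
    rw [bu, ih, List.ofFn_succ']
    simp [List.concat_eq_append, Fin.last]

/-! ### the limit map -/

section Limit

variable {B : Set (Cnt × Cnt)} (hB : BaireMeasurableSet B)
variable (e : List Bool → List Bool)

noncomputable def flim (x : Cnt) : Cnt := fun n => (sig hB (e (bu x (n + 1)))).1 n

variable (he : ∀ u b, ∃ r, e (u ++ [b]) = (e u ++ [b]) ++ r)
include he

lemma e_mono (u r : List Bool) : ∃ s, e (u ++ r) = e u ++ s := by
  induction r using List.reverseRecOn with
  | nil => exact ⟨[], by simp⟩
  | append_singleton r b ih =>
    obtain ⟨s, hs⟩ := ih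
    obtain ⟨t, ht⟩ := he (u ++ r) b
    exact ⟨(s ++ [b]) ++ t, by rw [← List.append_assoc, ht, hs]; simp⟩

lemma e_len (u : List Bool) : u.length ≤ (e u).length := by
  induction u using List.reverseRecOn with
  | nil => simp
  | append_singleton u b ih =>
    obtain ⟨t, ht⟩ := he u b
    rw [ht]
    simp only [List.length_append, List.length_singleton, length_append_single]
    omega

lemma sig_ebu_mono {x : Cnt} {m n : ℕ} (h : m ≤ n) :
    CExt (sig hB (e (bu x m))) (sig hB (e (bu x n))) := by
  obtain ⟨r, hr⟩ := bu_prefix' x h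
  obtain ⟨s, hs⟩ := e_mono e he (bu x m) r
  rw [hr, hs]
  exact M_ext hB _ s

lemma flim_mem (x : Cnt) (m : ℕ) : flim hB e x ∈ Cyl (sig hB (e (bu x m))) := by
  rw [mem_Cyl]
  intro i hi
  rcases le_or_gt (i + 1) m with h | h
  · have hext := sig_ebu_mono hB e he (x := x) h
    have hlen : i < (sig hB (e (bu x (i + 1)))).2 := by
      have h1 := M_len hB (e (bu x (i + 1)))
      have h2 := e_len e he (bu x (i + 1))
      rw [bu_length] at h2
      omega
    exact ((mem_Cyl.1 hext.2) i hlen).symm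
  · have hext := sig_ebu_mono hB e he (x := x) (show m ≤ i + 1 by omega)
    exact (mem_Cyl.1 hext.2) i hi

lemma flim_cont : Continuous (flim hB e) := by
  apply continuous_pi
  intro n
  have : (fun x => flim hB e x n) =
      (fun v : Fin (n + 1) → Bool => (sig hB (e (List.ofFn v))).1 n) ∘
        (fun x (i : Fin (n + 1)) => x i) := by
    funext x
    simp only [Function.comp_apply, flim, bu_ofFn]
  rw [this]
  exact continuous_of_discreteTopology.comp (continuous_pi fun i => continuous_apply i.1)

lemma flim_key {ε₀ : Bool} (heps : ∀ u, Feps hB (e u) = ε₀) {x y : Cnt} (hxy : x ≠ y)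
    (hx : x (firstDiff x y) = false) :
    flim hB e x ≠ flim hB e y ∧ (flim hB e x, flim hB e y) ∈ Bcol B ε₀ := by
  set d := firstDiff x y with hd
  have hyd : y d = true := by
    have h := PiNat.apply_firstDiff_ne hxy
    rw [← hd, hx] at h
    simpa using h.symm
  have hw : bu x d = bu y d := bu_eq_of_agree fun i hi => PiNat.apply_eq_of_lt_firstDiff hi
  set w := bu x d with hwdef
  have hbux : bu x (d + 1) = w ++ [false] := by rw [bu, hx]
  have hbuy : bu y (d + 1) = w ++ [true] := by rw [bu, ← hw, hyd]
  obtain ⟨r₁, hr₁⟩ := he w false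
  obtain ⟨r₂, hr₂⟩ := he w true
  have hfx : flim hB e x ∈ Cyl (sig hB (e w ++ [false])) := by
    refine Cyl_anti ?_ (flim_mem hB e he x (d + 1))
    rw [hbux, hr₁]
    exact M_ext hB _ r₁
  have hfy : flim hB e y ∈ Cyl (sig hB (e w ++ [true])) := by
    refine Cyl_anti ?_ (flim_mem hB e he y (d + 1))
    rw [hbuy, hr₂]
    exact M_ext hB _ r₂
  have hne : flim hB e x ≠ flim hB e y := by
    intro h
    exact M_disj hB hfx (h ▸ hfy)
  refine ⟨hne, ?_⟩
  by_contra hmem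
  have hbox : (flim hB e x, flim hB e y) ∈
      CBox (sig hB (e w ++ [false])) (sig hB (e w ++ [true])) := ⟨hfx, hfy⟩
  have hdec := M_decomp hB (e w)
  rw [heps w] at hdec
  obtain ⟨i, hFi⟩ := Set.mem_iUnion.1 (hdec ⟨hbox, hmem⟩)
  -- now contradict via avoidance
  set k := (e w).length with hk
  set N := max (k + 1) (i + 1) with hN
  set m := max (d + 1) N with hm
  -- U and V decompositions
  obtain ⟨rx, hrx⟩ := bu_prefix' x (show d + 1 ≤ m by omega)
  obtain ⟨sx, hsx⟩ := e_mono e he (bu x (d + 1)) rx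
  obtain ⟨ry, hry⟩ := bu_prefix' y (show d + 1 ≤ m by omega)
  obtain ⟨sy, hsy⟩ := e_mono e he (bu y (d + 1)) ry
  have hU : e (bu x m) = (e w ++ [false]) ++ (r₁ ++ sx) := by
    rw [hrx, hsx, hbux, hr₁]; simp
  have hV : e (bu y m) = (e w ++ [true]) ++ (r₂ ++ sy) := by
    rw [hry, hsy, hbuy, hr₂]; simp
  have hUlen : N ≤ (e (bu x m)).length := by
    have h1 := e_len e he (bu x m); rw [bu_length] at h1; omega
  have hVlen : N ≤ (e (bu y m)).length := by
    have h1 := e_len e he (bu y m); rw [bu_length] at h1; omega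
  set ut := (e (bu x m)).take N with hut
  set vt := (e (bu y m)).take N with hvt
  have hutlen : ut.length = N := by rw [hut, List.length_take]; omega
  have hvtlen : vt.length = N := by rw [hvt, List.length_take]; omega
  have hutd : ut = (e w ++ [false]) ++ (r₁ ++ sx).take (N - (k + 1)) := by
    rw [hut, hU, List.take_append, List.take_of_length_le (by simp; omega)]
    congr 2
    simp [hk]
  have hvtd : vt = (e w ++ [true]) ++ (r₂ ++ sy).take (N - (k + 1)) := by
    rw [hvt, hV, List.take_append, List.take_of_length_le (by simp; omega)]
    congr 2
    simp [hk]
  have hneq : ut ≠ vt := by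
    intro h
    rw [hutd, hvtd] at h
    have := List.append_inj_left h (by simp)
    have := List.append_cancel_left this
    simp at this
  have hmemx : flim hB e x ∈ Cyl (sig hB ut) := by
    refine Cyl_anti ?_ (flim_mem hB e he x m)
    have : e (bu x m) = ut ++ (e (bu x m)).drop N := by rw [hut, List.take_append_drop]
    rw [this]
    exact M_ext hB _ _
  have hmemy : flim hB e y ∈ Cyl (sig hB vt) := by
    refine Cyl_anti ?_ (flim_mem hB e he y m)
    have : e (bu y m) = vt ++ (e (bu y m)).drop N := by rw [hvt, List.take_append_drop]
    rw [this]
    exact M_ext hB _ _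
  have hav := M_avoid hB (n := N - 1) (u := ut) (v := vt) (w := e w) (i := i)
    (by omega) (by omega) hneq (by omega) (by omega)
  rw [Set.eq_empty_iff_forall_notMem] at hav
  exact hav (flim hB e x, flim hB e y) ⟨⟨hmemx, hmemy⟩, hFi⟩

end Limit

open MeasureTheory in
/-- Galvin's Borel partition theorem for pairs: a symmetric Borel subset of the
square of Cantor space admits a nonempty perfect homogeneous set. -/
theorem galvin_borel_coloring
    (B : Set ((ℕ → Bool) × (ℕ → Bool)))
    (hB_borel : MeasurableSet B)
    (hB_symm : ∀ x y : ℕ → Bool, (x, y) ∈ B ↔ (y, x) ∈ B) :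
    ∃ P : Set (ℕ → Bool), P.Nonempty ∧ Perfect P ∧
      ((∀ x ∈ P, ∀ y ∈ P, x ≠ y → (x, y) ∈ B) ∨
       (∀ x ∈ P, ∀ y ∈ P, x ≠ y → (x, y) ∉ B)) := by
  classical
  have hBm : BaireMeasurableSet B := hB_borel.baireMeasurableSet
  obtain ⟨ε₀, e, heps, he⟩ := prune (fun w => Feps hBm w)
  set f : Cnt → Cnt := flim hBm e with hf
  have hcont : Continuous f := flim_cont hBm e he
  -- key fact, symmetrized
  have hkey : ∀ x y : Cnt, x ≠ y → f x ≠ f y ∧ ((f x, f y) ∈ Bcol B ε₀) := by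
    intro x y hxy
    rcases Bool.dichotomy (x (firstDiff x y)) with h | h
    · obtain ⟨h1, h2⟩ := flim_key hBm e he heps hxy h
      exact ⟨h1, h2⟩
    · have hyx : y (firstDiff y x) = false := by
        have hne := PiNat.apply_firstDiff_ne hxy
        rw [h] at hne
        rw [PiNat.firstDiff_comm]
        simpa using (Ne.symm hne)
      obtain ⟨h1, h2⟩ := flim_key hBm e he heps (Ne.symm hxy) hyx
      refine ⟨Ne.symm h1, ?_⟩
      rcases Bool.dichotomy ε₀ with hε | hε <;> subst hε
      · simp only [Bcol, Bool.false_eq_true, if_false, Set.mem_compl_iff] at h2 ⊢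
        exact fun hmem => h2 ((hB_symm _ _).1 hmem)
      · simp only [Bcol, if_true] at h2 ⊢
        exact (hB_symm _ _).1 h2
  have hinj : Function.Injective f := by
    intro x y hxyf
    by_contra hxy
    exact (hkey x y hxy).1 hxyf
  -- the perfect set
  refine ⟨Set.range f, ⟨f (fun _ => false), Set.mem_range_self _⟩, ⟨?_, ?_⟩, ?_⟩
  · exact (isCompact_range hcont).isClosed
  · -- Preperfect
    intro a ha
    rw [accPt_iff_nhds]
    intro U hU
    obtain ⟨x, rfl⟩ := ha
    obtain ⟨t, ⟨z, n, rfl⟩, hmem, hsub⟩ :=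
      (PiNat.isTopologicalBasis_cylinders (fun _ : ℕ => Bool)).mem_nhds_iff.1 hU
    set x' := Function.update x n (!(x n)) with hx'
    have hbu : bu x' n = bu x n := by
      apply bu_eq_of_agree
      intro i hi
      simp [hx', Function.update_of_ne (by omega : i ≠ n)]
    have hxx' : x' ≠ x := by
      intro hcon
      have := congrFun hcon n
      simp [hx'] at this
    have hfagree : ∀ i < n, f x' i = f x i := by
      intro i hi
      have h1 := flim_mem hBm e he x n
      have h2 := flim_mem hBm e he x' n
      rw [hbu] at h2
      have hlen : n ≤ (sig hBm (e (bu x n))).2 := by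
        have l1 := M_len hBm (e (bu x n))
        have l2 := e_len e he (bu x n)
        rw [bu_length] at l2
        omega
      rw [mem_Cyl] at h1 h2
      show flim hBm e x' i = flim hBm e x i
      rw [h1 i (by omega), h2 i (by omega)]
    refine ⟨f x', ⟨hsub ?_, Set.mem_range_self _⟩, hinj.ne hxx'⟩
    have : f x' ∈ PiNat.cylinder (f x) n := PiNat.mem_cylinder_iff.2 hfagree
    rwa [PiNat.mem_cylinder_iff_eq.1 hmem] at this
  · -- homogeneity
    rcases Bool.dichotomy ε₀ with hε | hε <;> subst hε
    · right
      rintro a ⟨x, rfl⟩ b ⟨y, rfl⟩ hab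
      have hxy : x ≠ y := fun h => hab (h ▸ rfl)
      have h2 := (hkey x y hxy).2
      simpa [Bcol] using h2
    · left
      rintro a ⟨x, rfl⟩ b ⟨y, rfl⟩ hab
      have hxy : x ≠ y := fun h => hab (h ▸ rfl)
      have h2 := (hkey x y hxy).2
      simpa [Bcol] using h2
end Step
end
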